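/- arXiv:2506.23413 — 3 statements merged into one kernel-verified Lean document; each statement's English description precedes it below -/
import Mathlib

section
/- Let C be a regular category with finite coproducts satisfying: binary coproducts of pullbacks are pullbacks; for each monomorphism m : S → A the square with top [1_S,1_S], left m+1_S, bottom [1_A,m], right m is a pullback; and for each regular epimorphism p the codiagonal square over p is a feeble pullback. Then for any monomorphism m : S → A and any equivalence relation (R, r₁, r₂) on S, the reflexive closure of the relation (R, m r₁, m r₂) on A is again an equivalence relation (i.e., transitive and symmetric). -/
open CategoryTheory Limits

attribute [simp] pullback.lift_fst pullback.lift_snd pullback.lift_fst_assoc pullback.lift_snd_assoc coprod.inl_desc coprod.inr_desc coprod.inl_desc_assoc coprod.inr_desc_assoc prod.lift_fst prod.lift_snd prod.lift_fst_assoc prod.lift_snd_assoc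

/-- A commutative square (top `fst`, left `snd`, right `f`, bottom `g`) is a feeble
pullback if the canonical comparison morphism into the pullback is a regular
epimorphism. -/
def IsFeeblePullback {C : Type*} [CategoryTheory.Category C] {P X Y Z : C}
    (fst : P ⟶ X) (snd : P ⟶ Y) (f : X ⟶ Z) (g : Y ⟶ Z)
    [CategoryTheory.Limits.HasPullback f g] : Prop :=
  ∃ w : fst ≫ f = snd ≫ g,
    Nonempty (CategoryTheory.RegularEpi (CategoryTheory.Limits.pullback.lift fst snd w))

/-- Regular epimorphisms are stable under pullback. -/
def RegularEpisPullbackStable (C : Type*) [CategoryTheory.Category C]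
    [CategoryTheory.Limits.HasPullbacks C] : Prop :=
  ∀ {X Y Z : C} (f : X ⟶ Z) (g : Y ⟶ Z), CategoryTheory.RegularEpi g →
    Nonempty (CategoryTheory.RegularEpi (CategoryTheory.Limits.pullback.fst f g))

/-- Kernel pairs admit coequalizers. -/
def HasKernelPairCoequalizers (C : Type*) [CategoryTheory.Category C]
    [CategoryTheory.Limits.HasPullbacks C] : Prop :=
  ∀ {X Y : C} (f : X ⟶ Y),
    CategoryTheory.Limits.HasCoequalizer (CategoryTheory.Limits.pullback.fst f f)
      (CategoryTheory.Limits.pullback.snd f f)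

/-- Binary coproducts of pullback squares are pullback squares (Condition (b)). -/
def CoprodOfPullbacksIsPullback (C : Type*) [CategoryTheory.Category C]
    [CategoryTheory.Limits.HasBinaryCoproducts C] : Prop :=
  ∀ {P X Y Z P' X' Y' Z' : C}
    (fst : P ⟶ X) (snd : P ⟶ Y) (f : X ⟶ Z) (g : Y ⟶ Z)
    (fst' : P' ⟶ X') (snd' : P' ⟶ Y') (f' : X' ⟶ Z') (g' : Y' ⟶ Z'),
    CategoryTheory.IsPullback fst snd f g → CategoryTheory.IsPullback fst' snd' f' g' →
      CategoryTheory.IsPullback (CategoryTheory.Limits.coprod.map fst fst')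
        (CategoryTheory.Limits.coprod.map snd snd')
        (CategoryTheory.Limits.coprod.map f f') (CategoryTheory.Limits.coprod.map g g')

/-- Condition (c): for each monomorphism `m : S ⟶ A`, the square with top
`[1,1] : S+S ⟶ S`, left `m+1`, right `m` and bottom `[1,m] : A+S ⟶ A` is a pullback. -/
def MonoSquaresArePullbacks (C : Type*) [CategoryTheory.Category C]
    [CategoryTheory.Limits.HasBinaryCoproducts C] : Prop :=
  ∀ {S A : C} (m : S ⟶ A), CategoryTheory.Mono m →
    CategoryTheory.IsPullback (CategoryTheory.Limits.coprod.desc (𝟙 S) (𝟙 S))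
      (CategoryTheory.Limits.coprod.map m (𝟙 S)) m
      (CategoryTheory.Limits.coprod.desc (𝟙 A) m)

/-- Condition (d): for each regular epimorphism `p : E ⟶ B`, the codiagonal square over
`p` is a feeble pullback. -/
def RegEpiSquaresAreFeeblePullbacks (C : Type*) [CategoryTheory.Category C]
    [CategoryTheory.Limits.HasPullbacks C]
    [CategoryTheory.Limits.HasBinaryCoproducts C] : Prop :=
  ∀ {E B : C} (p : E ⟶ B), CategoryTheory.RegularEpi p →
    IsFeeblePullback (CategoryTheory.Limits.coprod.desc (𝟙 E) (𝟙 E))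
      (CategoryTheory.Limits.coprod.map p p) p
      (CategoryTheory.Limits.coprod.desc (𝟙 B) (𝟙 B))



/-- Regular epimorphisms are stable under pullback. -/
def RegularEpisPullbackStable' (C : Type*) [CategoryTheory.Category C]
    [CategoryTheory.Limits.HasPullbacks C] : Prop :=
  ∀ {X Y Z : C} (f : X ⟶ Z) (g : Y ⟶ Z), CategoryTheory.RegularEpi g →
    Nonempty (CategoryTheory.RegularEpi (CategoryTheory.Limits.pullback.fst f g))

namespace RefClAux

variable {C : Type*} [Category C]

/-- An isomorphism composed with a regular epimorphism is a regular epimorphism. -/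
noncomputable def regularEpiIsoComp {X' X Y : C} (i : X' ≅ X) (p : X ⟶ Y) (h : RegularEpi p) :
    RegularEpi (i.hom ≫ p) where
  W := h.W
  left := h.left ≫ i.inv
  right := h.right ≫ i.inv
  w := by
    simp only [Category.assoc, Iso.inv_hom_id_assoc]
    exact h.w
  isColimit := Cofork.IsColimit.mk' _ (fun s => by
    haveI := isRegularEpi_of_regularEpi h
    obtain ⟨l, hl⟩ := Cofork.IsColimit.desc' h.isColimit (i.inv ≫ s.π)
      (by simpa only [Category.assoc] using s.condition)
    simp only [Cofork.π_ofπ] at hl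
    refine ⟨l, ?_, fun {m} hm => ?_⟩
    · simp only [Cofork.π_ofπ, Category.assoc, hl, Iso.hom_inv_id_assoc]
    · haveI : Epi (i.hom ≫ p) := epi_comp _ _
      apply (cancel_epi (i.hom ≫ p)).1
      simp only [Cofork.π_ofπ] at hm
      rw [hm]
      simp only [Category.assoc, hl, Iso.hom_inv_id_assoc])

/-- A regular epimorphism composed with an isomorphism is a regular epimorphism. -/
noncomputable def regularEpiCompIso {X Y Y' : C} (p : X ⟶ Y) (i : Y ≅ Y') (h : RegularEpi p) :
    RegularEpi (p ≫ i.hom) where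
  W := h.W
  left := h.left
  right := h.right
  w := by rw [← Category.assoc, ← Category.assoc, h.w]
  isColimit := Cofork.IsColimit.mk' _ (fun s => by
    haveI := isRegularEpi_of_regularEpi h
    obtain ⟨l, hl⟩ := Cofork.IsColimit.desc' h.isColimit s.π s.condition
    simp only [Cofork.π_ofπ] at hl
    refine ⟨i.inv ≫ l, ?_, fun {m} hm => ?_⟩
    · simp only [Cofork.π_ofπ, Category.assoc, Iso.hom_inv_id_assoc, hl]
    · haveI : Epi (p ≫ i.hom) := epi_comp _ _
      apply (cancel_epi (p ≫ i.hom)).1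
      simp only [Cofork.π_ofπ] at hm
      rw [hm]
      simp only [Category.assoc, Iso.hom_inv_id_assoc, hl])

/-- Transport pullback stability along an `IsPullback` square. -/
noncomputable def regularEpiSndOfIsPullback [HasPullbacks C]
    (hstab : RegularEpisPullbackStable' C)
    {P X Y Z : C} {fst : P ⟶ X} {snd : P ⟶ Y} {f : X ⟶ Z} {g : Y ⟶ Z}
    (hpb : IsPullback fst snd f g) (hf : RegularEpi f) : RegularEpi snd := by
  have h1 := (hstab g f hf).some
  have hs : snd = hpb.flip.isoPullback.hom ≫ pullback.fst g f :=
    (hpb.flip.isoPullback_hom_fst).symm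
  rw [hs]
  exact regularEpiIsoComp _ _ h1

/-- The comparison between pullbacks induced by precomposition in the first leg is
itself a pullback of the precomposed morphism. -/
theorem isPullback_lift_fst [HasPullbacks C] {X' X Y Z : C} (q : X' ⟶ X) (f : X ⟶ Z)
    {f' : X' ⟶ Z} (g : Y ⟶ Z) (hq : q ≫ f = f') :
    IsPullback (pullback.fst f' g)
      (pullback.lift (pullback.fst f' g ≫ q) (pullback.snd f' g)
        (by rw [Category.assoc, hq, pullback.condition]))
      q (pullback.fst f g) := by
  refine IsPullback.of_isLimit' ⟨by simp⟩ ?_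
  refine PullbackCone.IsLimit.mk _
    (fun s => pullback.lift s.fst (s.snd ≫ pullback.snd f g) ?_)
    (fun s => by simp) (fun s => ?_) (fun s mm h1 h2 => ?_)
  · rw [← hq, ← Category.assoc, s.condition, Category.assoc, Category.assoc,
      pullback.condition]
  · apply pullback.hom_ext
    · simp only [Category.assoc, pullback.lift_fst]
      rw [← Category.assoc, pullback.lift_fst, s.condition]
    · simp
  · apply pullback.hom_ext
    · simpa using h1
    · have h3 := congrArg (· ≫ pullback.snd f g) h2
      simpa using h3

/-- The comparison between pullbacks induced by precomposition in the second leg is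
itself a pullback of the precomposed morphism. -/
theorem isPullback_lift_snd [HasPullbacks C] {X Y Y' Z : C} (q : Y' ⟶ Y) (g : Y ⟶ Z)
    {g' : Y' ⟶ Z} (f : X ⟶ Z) (hq : q ≫ g = g') :
    IsPullback (pullback.snd f g')
      (pullback.lift (pullback.fst f g') (pullback.snd f g' ≫ q)
        (by rw [Category.assoc, hq]; exact pullback.condition))
      q (pullback.snd f g) := by
  refine IsPullback.of_isLimit' ⟨by simp⟩ ?_
  refine PullbackCone.IsLimit.mk _
    (fun s => pullback.lift (s.snd ≫ pullback.fst f g) s.fst ?_)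
    (fun s => by simp) (fun s => ?_) (fun s mm h1 h2 => ?_)
  · rw [Category.assoc, pullback.condition, ← Category.assoc, ← s.condition,
      Category.assoc, hq]
  · apply pullback.hom_ext
    · simp
    · simp only [Category.assoc, pullback.lift_snd]
      rw [← Category.assoc, pullback.lift_snd, s.condition]
  · apply pullback.hom_ext
    · have h3 := congrArg (· ≫ pullback.fst f g) h2
      simpa using h3
    · simpa using h1

/-- Binary coproducts of regular epimorphisms are regular epimorphisms. -/
noncomputable def regularEpiCoprodMap [HasBinaryCoproducts C] {X₁ Y₁ X₂ Y₂ : C}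
    (p : X₁ ⟶ Y₁) (p' : X₂ ⟶ Y₂) (h : RegularEpi p) (h' : RegularEpi p') :
    RegularEpi (coprod.map p p') where
  W := h.W ⨿ h'.W
  left := coprod.map h.left h'.left
  right := coprod.map h.right h'.right
  w := by rw [coprod.map_map, coprod.map_map, h.w, h'.w]
  isColimit := Cofork.IsColimit.mk' _ (fun s => by
    haveI := isRegularEpi_of_regularEpi h; haveI := isRegularEpi_of_regularEpi h'
    have e1 : h.left ≫ (coprod.inl ≫ s.π) = h.right ≫ (coprod.inl ≫ s.π) := by
      have := congrArg (coprod.inl ≫ ·) s.condition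
      simpa using this
    have e2 : h'.left ≫ (coprod.inr ≫ s.π) = h'.right ≫ (coprod.inr ≫ s.π) := by
      have := congrArg (coprod.inr ≫ ·) s.condition
      simpa using this
    obtain ⟨l₁, hl₁⟩ := Cofork.IsColimit.desc' h.isColimit _ e1
    obtain ⟨l₂, hl₂⟩ := Cofork.IsColimit.desc' h'.isColimit _ e2
    simp only [Cofork.π_ofπ] at hl₁ hl₂
    refine ⟨coprod.desc l₁ l₂, ?_, fun {mm} hm => ?_⟩
    · apply coprod.hom_ext
      · simpa using hl₁
      · simpa using hl₂
    · simp only [Cofork.π_ofπ] at hm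
      apply coprod.hom_ext
      · apply (cancel_epi p).1
        have := congrArg (coprod.inl ≫ ·) hm
        simp only [coprod.inl_map_assoc] at this
        simpa [hl₁] using this
      · apply (cancel_epi p').1
        have := congrArg (coprod.inr ≫ ·) hm
        simp only [coprod.inr_map_assoc] at this
        simpa [hl₂] using this)

end RefClAux

open RefClAux in
set_option maxHeartbeats 2000000 in
/-- Let `C` be a regular category with finite coproducts satisfying Conditions (b), (c)
and (d). For any monomorphism `m : S ⟶ A` and any equivalence relation `(R, r₁, r₂)` on
`S`, the reflexive closure of the relation `(R, r₁ ≫ m, r₂ ≫ m)` on `A` — obtained from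
any (regular epi, mono)-factorization of `[⟨r₁≫m, r₂≫m⟩, ⟨1,1⟩] : R+A ⟶ A×A` — is again
an equivalence relation (reflexive, symmetric and transitive). -/
theorem reflexive_closure_is_equivalence_relation {C : Type*} [Category C]
    [HasFiniteLimits C] (hcoeq : HasKernelPairCoequalizers C)
    (hstab : RegularEpisPullbackStable C) [HasFiniteCoproducts C]
    (hb : CoprodOfPullbacksIsPullback C) (hc : MonoSquaresArePullbacks C)
    (hd : RegEpiSquaresAreFeeblePullbacks C)
    {S A R : C} (m : S ⟶ A) [Mono m] (r₁ r₂ : R ⟶ S)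
    (hmono : Mono (prod.lift r₁ r₂))
    (hrefl : ∃ d : S ⟶ R, d ≫ r₁ = 𝟙 S ∧ d ≫ r₂ = 𝟙 S)
    (hsymm : ∃ s : R ⟶ R, s ≫ r₁ = r₂ ∧ s ≫ r₂ = r₁)
    (htrans : ∃ t : pullback r₂ r₁ ⟶ R,
      t ≫ r₁ = pullback.fst r₂ r₁ ≫ r₁ ∧ t ≫ r₂ = pullback.snd r₂ r₁ ≫ r₂)
    {Rbar : C} (e : R ⨿ A ⟶ Rbar) (mb : Rbar ⟶ A ⨯ A)
    (he : RegularEpi e) (hmb : Mono mb)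
    (hfact : e ≫ mb =
      coprod.desc (prod.lift (r₁ ≫ m) (r₂ ≫ m)) (prod.lift (𝟙 A) (𝟙 A))) :
    (∃ d : A ⟶ Rbar, d ≫ mb ≫ prod.fst = 𝟙 A ∧ d ≫ mb ≫ prod.snd = 𝟙 A) ∧
    (∃ s : Rbar ⟶ Rbar, s ≫ mb ≫ prod.fst = mb ≫ prod.snd ∧
      s ≫ mb ≫ prod.snd = mb ≫ prod.fst) ∧
    (∃ t : pullback (mb ≫ prod.snd) (mb ≫ prod.fst) ⟶ Rbar,
      t ≫ mb ≫ prod.fst =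
        pullback.fst (mb ≫ prod.snd) (mb ≫ prod.fst) ≫ mb ≫ prod.fst ∧
      t ≫ mb ≫ prod.snd =
        pullback.snd (mb ≫ prod.snd) (mb ≫ prod.fst) ≫ mb ≫ prod.snd) := by
  haveI := isRegularEpi_of_regularEpi he
  haveI := hmb
  obtain ⟨d0, hd01, hd02⟩ := hrefl
  obtain ⟨s0, hs01, hs02⟩ := hsymm
  obtain ⟨t0, ht01, ht02⟩ := htrans
  have hstab' : RegularEpisPullbackStable' C := hstab
  have hGfst : e ≫ mb ≫ prod.fst = coprod.desc (r₁ ≫ m) (𝟙 A) := by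
    rw [← Category.assoc, hfact]
    apply coprod.hom_ext <;> simp
  have hGsnd : e ≫ mb ≫ prod.snd = coprod.desc (r₂ ≫ m) (𝟙 A) := by
    rw [← Category.assoc, hfact]
    apply coprod.hom_ext <;> simp
  refine ⟨⟨coprod.inr ≫ e, ?_, ?_⟩, ?_, ?_⟩
  · rw [Category.assoc, hGfst]; simp
  · rw [Category.assoc, hGsnd]; simp
  · -- Symmetry
    have comm : (coprod.map s0 (𝟙 A) ≫ e) ≫ mb =
        e ≫ (mb ≫ prod.lift prod.snd prod.fst) := by
      rw [Category.assoc, hfact, reassoc_of% hfact]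
      apply coprod.hom_ext <;> apply Limits.prod.hom_ext <;>
        simp [reassoc_of% hs01, reassoc_of% hs02]
    have sq : CommSq (coprod.map s0 (𝟙 A) ≫ e) e mb
        (mb ≫ prod.lift prod.snd prod.fst) := ⟨comm⟩
    refine ⟨sq.lift, ?_, ?_⟩
    · rw [← Category.assoc, sq.fac_right]; simp
    · rw [← Category.assoc, sq.fac_right]; simp
  · -- Transitivity
    -- Stage 1 : cover of pullback w w
    obtain ⟨ζ, ⟨hζre⟩, hζ1, hζ2⟩ :
        ∃ ζ : (S ⨿ S) ⨿ (S ⨿ A) ⟶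
            pullback (coprod.desc m (𝟙 A)) (coprod.desc m (𝟙 A)),
          Nonempty (RegularEpi ζ) ∧
          ζ ≫ pullback.fst (coprod.desc m (𝟙 A)) (coprod.desc m (𝟙 A)) =
            coprod.desc (coprod.map (𝟙 S) m) (𝟙 (S ⨿ A)) ∧
          ζ ≫ pullback.snd (coprod.desc m (𝟙 A)) (coprod.desc m (𝟙 A)) =
            coprod.map (coprod.desc (𝟙 S) (𝟙 S)) (coprod.desc m (𝟙 A)) := by
      haveI : IsSplitEpi (coprod.desc m (𝟙 A)) := IsSplitEpi.mk' ⟨coprod.inr, by simp⟩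
      obtain ⟨c1, ⟨hc1re⟩, hc11, hc12⟩ :
          ∃ c1 : (S ⨿ A) ⨿ (S ⨿ A) ⟶
              pullback (coprod.desc m (𝟙 A)) (coprod.desc (𝟙 A) (𝟙 A)),
            Nonempty (RegularEpi c1) ∧
            c1 ≫ pullback.fst (coprod.desc m (𝟙 A)) (coprod.desc (𝟙 A) (𝟙 A)) =
              coprod.desc (𝟙 (S ⨿ A)) (𝟙 (S ⨿ A)) ∧
            c1 ≫ pullback.snd (coprod.desc m (𝟙 A)) (coprod.desc (𝟙 A) (𝟙 A)) =
              coprod.map (coprod.desc m (𝟙 A)) (coprod.desc m (𝟙 A)) := by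
        obtain ⟨wd1, ⟨h⟩⟩ := hd (coprod.desc m (𝟙 A)) (RegularEpi.ofSplitEpi _)
        exact ⟨_, ⟨h⟩, pullback.lift_fst _ _ _, pullback.lift_snd _ _ _⟩
      have Pc : IsPullback (coprod.map (𝟙 S) m) (coprod.desc (𝟙 S) (𝟙 S))
          (coprod.desc m (𝟙 A)) m := by
        have P1 := (hc m inferInstance).flip
        exact P1.of_iso (coprod.braiding S S) (coprod.braiding A S) (Iso.refl S)
          (Iso.refl A) (by apply coprod.hom_ext <;> simp)
          (by apply coprod.hom_ext <;> simp)
          (by apply coprod.hom_ext <;> simp) (by simp)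
      have Pt : IsPullback (𝟙 (S ⨿ A)) (coprod.desc m (𝟙 A)) (coprod.desc m (𝟙 A))
          (𝟙 A) := IsPullback.of_horiz_isIso ⟨by simp⟩
      have B1 := hb (coprod.map (𝟙 S) m) (coprod.desc (𝟙 S) (𝟙 S))
        (coprod.desc m (𝟙 A)) m (𝟙 (S ⨿ A)) (coprod.desc m (𝟙 A))
        (coprod.desc m (𝟙 A)) (𝟙 A) Pc Pt
      obtain ⟨ψ, hψpb, hψ1, hψ2⟩ :
          ∃ ψ : pullback (coprod.map (coprod.desc m (𝟙 A)) (coprod.desc m (𝟙 A)))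
                (coprod.map m (𝟙 A)) ⟶
              pullback (pullback.snd (coprod.desc m (𝟙 A)) (coprod.desc (𝟙 A) (𝟙 A)))
                (coprod.map m (𝟙 A)),
            IsPullback
              (pullback.fst (coprod.map (coprod.desc m (𝟙 A)) (coprod.desc m (𝟙 A)))
                (coprod.map m (𝟙 A))) ψ c1
              (pullback.fst (pullback.snd (coprod.desc m (𝟙 A)) (coprod.desc (𝟙 A) (𝟙 A)))
                (coprod.map m (𝟙 A))) ∧
            ψ ≫ pullback.fst (pullback.snd (coprod.desc m (𝟙 A)) (coprod.desc (𝟙 A) (𝟙 A)))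
                (coprod.map m (𝟙 A)) =
              pullback.fst (coprod.map (coprod.desc m (𝟙 A)) (coprod.desc m (𝟙 A)))
                (coprod.map m (𝟙 A)) ≫ c1 ∧
            ψ ≫ pullback.snd (pullback.snd (coprod.desc m (𝟙 A)) (coprod.desc (𝟙 A) (𝟙 A)))
                (coprod.map m (𝟙 A)) =
              pullback.snd (coprod.map (coprod.desc m (𝟙 A)) (coprod.desc m (𝟙 A)))
                (coprod.map m (𝟙 A)) :=
        ⟨_, isPullback_lift_fst c1 _ _ hc12, pullback.lift_fst _ _ _,
          pullback.lift_snd _ _ _⟩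
      have hψre : RegularEpi ψ := regularEpiSndOfIsPullback hstab' hψpb hc1re
      have Pz := IsPullback.paste_horiz
        (IsPullback.of_hasPullback
          (pullback.snd (coprod.desc m (𝟙 A)) (coprod.desc (𝟙 A) (𝟙 A)))
          (coprod.map m (𝟙 A)))
        (IsPullback.of_hasPullback (coprod.desc m (𝟙 A)) (coprod.desc (𝟙 A) (𝟙 A)))
      have hμ : coprod.map m (𝟙 A) ≫ coprod.desc (𝟙 A) (𝟙 A) = coprod.desc m (𝟙 A) := by
        apply coprod.hom_ext <;> simp
      rw [hμ] at Pz
      refine ⟨B1.isoPullback.hom ≫ ψ ≫ Pz.isoPullback.hom,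
        ⟨regularEpiIsoComp _ _ (regularEpiCompIso _ _ hψre)⟩, ?_, ?_⟩
      · simp only [Category.assoc, Pz.isoPullback_hom_fst]
        rw [reassoc_of% hψ1, hc11, reassoc_of% B1.isoPullback_hom_fst]
        apply coprod.hom_ext <;> simp
      · simp only [Category.assoc, Pz.isoPullback_hom_snd]
        rw [hψ2, B1.isoPullback_hom_snd]
    -- Stage 2 : cover of pullback w h₂
    obtain ⟨β, ⟨hβre⟩, hβ1, hβ2⟩ :
        ∃ β : pullback (coprod.desc (𝟙 S) (𝟙 S)) r₁ ⨿ (S ⨿ A) ⟶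
            pullback (coprod.desc m (𝟙 A)) (coprod.desc (r₁ ≫ m) (𝟙 A)),
          Nonempty (RegularEpi β) ∧
          β ≫ pullback.fst (coprod.desc m (𝟙 A)) (coprod.desc (r₁ ≫ m) (𝟙 A)) =
            coprod.desc (pullback.fst (coprod.desc (𝟙 S) (𝟙 S)) r₁ ≫
              coprod.map (𝟙 S) m) (𝟙 (S ⨿ A)) ∧
          β ≫ pullback.snd (coprod.desc m (𝟙 A)) (coprod.desc (r₁ ≫ m) (𝟙 A)) =
            coprod.map (pullback.snd (coprod.desc (𝟙 S) (𝟙 S)) r₁)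
              (coprod.desc m (𝟙 A)) := by
      have Pt : IsPullback (𝟙 (S ⨿ A)) (coprod.desc m (𝟙 A)) (coprod.desc m (𝟙 A))
          (𝟙 A) := IsPullback.of_horiz_isIso ⟨by simp⟩
      have B2 := hb (pullback.fst (coprod.desc (𝟙 S) (𝟙 S)) r₁)
        (pullback.snd (coprod.desc (𝟙 S) (𝟙 S)) r₁) (coprod.desc (𝟙 S) (𝟙 S)) r₁
        (𝟙 (S ⨿ A)) (coprod.desc m (𝟙 A)) (coprod.desc m (𝟙 A)) (𝟙 A)
        (IsPullback.of_hasPullback (coprod.desc (𝟙 S) (𝟙 S)) r₁) Pt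
      obtain ⟨ψ, hψpb, hψ1, hψ2⟩ :
          ∃ ψ : pullback (coprod.map (coprod.desc (𝟙 S) (𝟙 S)) (coprod.desc m (𝟙 A)))
                (coprod.map r₁ (𝟙 A)) ⟶
              pullback (pullback.snd (coprod.desc m (𝟙 A)) (coprod.desc m (𝟙 A)))
                (coprod.map r₁ (𝟙 A)),
            IsPullback
              (pullback.fst (coprod.map (coprod.desc (𝟙 S) (𝟙 S)) (coprod.desc m (𝟙 A)))
                (coprod.map r₁ (𝟙 A))) ψ ζ
              (pullback.fst (pullback.snd (coprod.desc m (𝟙 A)) (coprod.desc m (𝟙 A)))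
                (coprod.map r₁ (𝟙 A))) ∧
            ψ ≫ pullback.fst (pullback.snd (coprod.desc m (𝟙 A)) (coprod.desc m (𝟙 A)))
                (coprod.map r₁ (𝟙 A)) =
              pullback.fst (coprod.map (coprod.desc (𝟙 S) (𝟙 S)) (coprod.desc m (𝟙 A)))
                (coprod.map r₁ (𝟙 A)) ≫ ζ ∧
            ψ ≫ pullback.snd (pullback.snd (coprod.desc m (𝟙 A)) (coprod.desc m (𝟙 A)))
                (coprod.map r₁ (𝟙 A)) =
              pullback.snd (coprod.map (coprod.desc (𝟙 S) (𝟙 S)) (coprod.desc m (𝟙 A)))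
                (coprod.map r₁ (𝟙 A)) :=
        ⟨_, isPullback_lift_fst ζ _ _ hζ2, pullback.lift_fst _ _ _,
          pullback.lift_snd _ _ _⟩
      have hψre : RegularEpi ψ := regularEpiSndOfIsPullback hstab' hψpb hζre
      have Py := IsPullback.paste_horiz
        (IsPullback.of_hasPullback
          (pullback.snd (coprod.desc m (𝟙 A)) (coprod.desc m (𝟙 A)))
          (coprod.map r₁ (𝟙 A)))
        (IsPullback.of_hasPullback (coprod.desc m (𝟙 A)) (coprod.desc m (𝟙 A)))
      have hv1 : coprod.map r₁ (𝟙 A) ≫ coprod.desc m (𝟙 A) =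
          coprod.desc (r₁ ≫ m) (𝟙 A) := by apply coprod.hom_ext <;> simp
      rw [hv1] at Py
      refine ⟨B2.isoPullback.hom ≫ ψ ≫ Py.isoPullback.hom,
        ⟨regularEpiIsoComp _ _ (regularEpiCompIso _ _ hψre)⟩, ?_, ?_⟩
      · simp only [Category.assoc, Py.isoPullback_hom_fst]
        rw [reassoc_of% hψ1, hζ1, reassoc_of% B2.isoPullback_hom_fst]
        apply coprod.hom_ext <;> simp
      · simp only [Category.assoc, Py.isoPullback_hom_snd]
        rw [hψ2, B2.isoPullback_hom_snd]
    -- the cover of the pullback pullback.fst/snd of ∇S r₁ by R ⨿ R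
    obtain ⟨c2, ⟨hc2re⟩, hc21, hc22⟩ :
        ∃ c2 : R ⨿ R ⟶ pullback (coprod.desc (𝟙 S) (𝟙 S)) r₁,
          Nonempty (RegularEpi c2) ∧
          c2 ≫ pullback.fst (coprod.desc (𝟙 S) (𝟙 S)) r₁ = coprod.map r₁ r₁ ∧
          c2 ≫ pullback.snd (coprod.desc (𝟙 S) (𝟙 S)) r₁ = coprod.desc (𝟙 R) (𝟙 R) := by
      haveI : IsSplitEpi r₁ := IsSplitEpi.mk' ⟨d0, hd01⟩
      obtain ⟨wd2, ⟨h⟩⟩ := hd r₁ (RegularEpi.ofSplitEpi _)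
      refine ⟨pullback.lift (coprod.desc (𝟙 R) (𝟙 R)) (coprod.map r₁ r₁) wd2 ≫
        (pullbackSymmetry r₁ (coprod.desc (𝟙 S) (𝟙 S))).hom,
        ⟨regularEpiCompIso _ _ h⟩, ?_, ?_⟩
      · rw [Category.assoc, pullbackSymmetry_hom_comp_fst, pullback.lift_snd]
      · rw [Category.assoc, pullbackSymmetry_hom_comp_snd, pullback.lift_fst]
    -- Stage 3 : terminal cover γ
    obtain ⟨γ, ⟨hγre⟩, hγ1, hγ2⟩ :
        ∃ γ : (pullback r₂ r₁ ⨿ R) ⨿ (R ⨿ A) ⟶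
            pullback (coprod.map r₂ (𝟙 A))
              (coprod.desc (coprod.map r₁ (r₁ ≫ m)) (𝟙 (S ⨿ A))),
          Nonempty (RegularEpi γ) ∧
          γ ≫ pullback.fst (coprod.map r₂ (𝟙 A))
              (coprod.desc (coprod.map r₁ (r₁ ≫ m)) (𝟙 (S ⨿ A))) =
            coprod.desc (coprod.map (pullback.fst r₂ r₁) (r₁ ≫ m)) (𝟙 (R ⨿ A)) ∧
          γ ≫ pullback.snd (coprod.map r₂ (𝟙 A))
              (coprod.desc (coprod.map r₁ (r₁ ≫ m)) (𝟙 (S ⨿ A))) =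
            coprod.map (coprod.map (pullback.snd r₂ r₁) (𝟙 R))
              (coprod.map r₂ (𝟙 A)) := by
      haveI : IsSplitEpi (coprod.map r₂ (𝟙 A)) :=
        IsSplitEpi.mk' ⟨coprod.map d0 (𝟙 A), by rw [coprod.map_map, hd02]; simp⟩
      obtain ⟨c3, ⟨hc3re⟩, hc31, hc32⟩ :
          ∃ c3 : (R ⨿ A) ⨿ (R ⨿ A) ⟶
              pullback (coprod.map r₂ (𝟙 A)) (coprod.desc (𝟙 (S ⨿ A)) (𝟙 (S ⨿ A))),
            Nonempty (RegularEpi c3) ∧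
            c3 ≫ pullback.fst (coprod.map r₂ (𝟙 A))
                (coprod.desc (𝟙 (S ⨿ A)) (𝟙 (S ⨿ A))) =
              coprod.desc (𝟙 (R ⨿ A)) (𝟙 (R ⨿ A)) ∧
            c3 ≫ pullback.snd (coprod.map r₂ (𝟙 A))
                (coprod.desc (𝟙 (S ⨿ A)) (𝟙 (S ⨿ A))) =
              coprod.map (coprod.map r₂ (𝟙 A)) (coprod.map r₂ (𝟙 A)) := by
        obtain ⟨wd3, ⟨h⟩⟩ := hd (coprod.map r₂ (𝟙 A)) (RegularEpi.ofSplitEpi _)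
        exact ⟨_, ⟨h⟩, pullback.lift_fst _ _ _, pullback.lift_snd _ _ _⟩
      have Ptriv : IsPullback (r₁ ≫ m) (𝟙 R) (𝟙 A) (r₁ ≫ m) :=
        IsPullback.of_vert_isIso ⟨by simp⟩
      have B3 := hb (pullback.fst r₂ r₁) (pullback.snd r₂ r₁) r₂ r₁
        (r₁ ≫ m) (𝟙 R) (𝟙 A) (r₁ ≫ m) (IsPullback.of_hasPullback r₂ r₁) Ptriv
      have Ptriv2 : IsPullback (𝟙 (R ⨿ A)) (coprod.map r₂ (𝟙 A)) (coprod.map r₂ (𝟙 A))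
          (𝟙 (S ⨿ A)) := IsPullback.of_horiz_isIso ⟨by simp⟩
      have B4 := hb (coprod.map (pullback.fst r₂ r₁) (r₁ ≫ m))
        (coprod.map (pullback.snd r₂ r₁) (𝟙 R)) (coprod.map r₂ (𝟙 A))
        (coprod.map r₁ (r₁ ≫ m)) (𝟙 (R ⨿ A)) (coprod.map r₂ (𝟙 A))
        (coprod.map r₂ (𝟙 A)) (𝟙 (S ⨿ A)) B3 Ptriv2
      obtain ⟨ψ, hψpb, hψ1, hψ2⟩ :
          ∃ ψ : pullback (coprod.map (coprod.map r₂ (𝟙 A)) (coprod.map r₂ (𝟙 A)))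
                (coprod.map (coprod.map r₁ (r₁ ≫ m)) (𝟙 (S ⨿ A))) ⟶
              pullback
                (pullback.snd (coprod.map r₂ (𝟙 A)) (coprod.desc (𝟙 (S ⨿ A)) (𝟙 (S ⨿ A))))
                (coprod.map (coprod.map r₁ (r₁ ≫ m)) (𝟙 (S ⨿ A))),
            IsPullback
              (pullback.fst (coprod.map (coprod.map r₂ (𝟙 A)) (coprod.map r₂ (𝟙 A)))
                (coprod.map (coprod.map r₁ (r₁ ≫ m)) (𝟙 (S ⨿ A)))) ψ c3
              (pullback.fst
                (pullback.snd (coprod.map r₂ (𝟙 A)) (coprod.desc (𝟙 (S ⨿ A)) (𝟙 (S ⨿ A))))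
                (coprod.map (coprod.map r₁ (r₁ ≫ m)) (𝟙 (S ⨿ A)))) ∧
            ψ ≫ pullback.fst
                (pullback.snd (coprod.map r₂ (𝟙 A)) (coprod.desc (𝟙 (S ⨿ A)) (𝟙 (S ⨿ A))))
                (coprod.map (coprod.map r₁ (r₁ ≫ m)) (𝟙 (S ⨿ A))) =
              pullback.fst (coprod.map (coprod.map r₂ (𝟙 A)) (coprod.map r₂ (𝟙 A)))
                (coprod.map (coprod.map r₁ (r₁ ≫ m)) (𝟙 (S ⨿ A))) ≫ c3 ∧
            ψ ≫ pullback.snd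
                (pullback.snd (coprod.map r₂ (𝟙 A)) (coprod.desc (𝟙 (S ⨿ A)) (𝟙 (S ⨿ A))))
                (coprod.map (coprod.map r₁ (r₁ ≫ m)) (𝟙 (S ⨿ A))) =
              pullback.snd (coprod.map (coprod.map r₂ (𝟙 A)) (coprod.map r₂ (𝟙 A)))
                (coprod.map (coprod.map r₁ (r₁ ≫ m)) (𝟙 (S ⨿ A))) :=
        ⟨_, isPullback_lift_fst c3 _ _ hc32, pullback.lift_fst _ _ _,
          pullback.lift_snd _ _ _⟩
      have hψre : RegularEpi ψ := regularEpiSndOfIsPullback hstab' hψpb hc3re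
      have Pu := IsPullback.paste_horiz
        (IsPullback.of_hasPullback
          (pullback.snd (coprod.map r₂ (𝟙 A)) (coprod.desc (𝟙 (S ⨿ A)) (𝟙 (S ⨿ A))))
          (coprod.map (coprod.map r₁ (r₁ ≫ m)) (𝟙 (S ⨿ A))))
        (IsPullback.of_hasPullback (coprod.map r₂ (𝟙 A))
          (coprod.desc (𝟙 (S ⨿ A)) (𝟙 (S ⨿ A))))
      have hm3 : coprod.map (coprod.map r₁ (r₁ ≫ m)) (𝟙 (S ⨿ A)) ≫
          coprod.desc (𝟙 (S ⨿ A)) (𝟙 (S ⨿ A)) =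
          coprod.desc (coprod.map r₁ (r₁ ≫ m)) (𝟙 (S ⨿ A)) := by
        apply coprod.hom_ext <;> simp
      rw [hm3] at Pu
      refine ⟨B4.isoPullback.hom ≫ ψ ≫ Pu.isoPullback.hom,
        ⟨regularEpiIsoComp _ _ (regularEpiCompIso _ _ hψre)⟩, ?_, ?_⟩
      · simp only [Category.assoc, Pu.isoPullback_hom_fst]
        rw [reassoc_of% hψ1, hc31, reassoc_of% B4.isoPullback_hom_fst]
        apply coprod.hom_ext <;> simp
      · simp only [Category.assoc, Pu.isoPullback_hom_snd]
        rw [hψ2, B4.isoPullback_hom_snd]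
    -- pulling back κ = coprod.map c2 𝟙
    have hκy : coprod.map c2 (𝟙 (S ⨿ A)) ≫
        coprod.desc (pullback.fst (coprod.desc (𝟙 S) (𝟙 S)) r₁ ≫
          coprod.map (𝟙 S) m) (𝟙 (S ⨿ A)) =
        coprod.desc (coprod.map r₁ (r₁ ≫ m)) (𝟙 (S ⨿ A)) := by
      apply coprod.hom_ext
      · simp [reassoc_of% hc21]
      · simp
    obtain ⟨φ2, hφ2pb, hφ21, hφ22⟩ :
        ∃ φ2 : pullback (coprod.map r₂ (𝟙 A))
              (coprod.desc (coprod.map r₁ (r₁ ≫ m)) (𝟙 (S ⨿ A))) ⟶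
            pullback (coprod.map r₂ (𝟙 A))
              (coprod.desc (pullback.fst (coprod.desc (𝟙 S) (𝟙 S)) r₁ ≫
                coprod.map (𝟙 S) m) (𝟙 (S ⨿ A))),
          IsPullback
            (pullback.snd (coprod.map r₂ (𝟙 A))
              (coprod.desc (coprod.map r₁ (r₁ ≫ m)) (𝟙 (S ⨿ A)))) φ2
            (coprod.map c2 (𝟙 (S ⨿ A)))
            (pullback.snd (coprod.map r₂ (𝟙 A))
              (coprod.desc (pullback.fst (coprod.desc (𝟙 S) (𝟙 S)) r₁ ≫
                coprod.map (𝟙 S) m) (𝟙 (S ⨿ A)))) ∧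
          φ2 ≫ pullback.fst (coprod.map r₂ (𝟙 A))
              (coprod.desc (pullback.fst (coprod.desc (𝟙 S) (𝟙 S)) r₁ ≫
                coprod.map (𝟙 S) m) (𝟙 (S ⨿ A))) =
            pullback.fst (coprod.map r₂ (𝟙 A))
              (coprod.desc (coprod.map r₁ (r₁ ≫ m)) (𝟙 (S ⨿ A))) ∧
          φ2 ≫ pullback.snd (coprod.map r₂ (𝟙 A))
              (coprod.desc (pullback.fst (coprod.desc (𝟙 S) (𝟙 S)) r₁ ≫
                coprod.map (𝟙 S) m) (𝟙 (S ⨿ A))) =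
            pullback.snd (coprod.map r₂ (𝟙 A))
              (coprod.desc (coprod.map r₁ (r₁ ≫ m)) (𝟙 (S ⨿ A))) ≫
              coprod.map c2 (𝟙 (S ⨿ A)) :=
      ⟨_, isPullback_lift_snd (coprod.map c2 (𝟙 (S ⨿ A))) _ _ hκy,
        pullback.lift_fst _ _ _, pullback.lift_snd _ _ _⟩
    have hφ2re : RegularEpi φ2 := regularEpiSndOfIsPullback hstab' hφ2pb
      (regularEpiCoprodMap _ _ hc2re (RegularEpi.ofIso (Iso.refl _)))
    -- pulling back β
    obtain ⟨φ1, hφ1pb, hφ11, hφ12⟩ :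
        ∃ φ1 : pullback (coprod.map r₂ (𝟙 A))
              (coprod.desc (pullback.fst (coprod.desc (𝟙 S) (𝟙 S)) r₁ ≫
                coprod.map (𝟙 S) m) (𝟙 (S ⨿ A))) ⟶
            pullback (coprod.map r₂ (𝟙 A))
              (pullback.fst (coprod.desc m (𝟙 A)) (coprod.desc (r₁ ≫ m) (𝟙 A))),
          IsPullback
            (pullback.snd (coprod.map r₂ (𝟙 A))
              (coprod.desc (pullback.fst (coprod.desc (𝟙 S) (𝟙 S)) r₁ ≫
                coprod.map (𝟙 S) m) (𝟙 (S ⨿ A)))) φ1 β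
            (pullback.snd (coprod.map r₂ (𝟙 A))
              (pullback.fst (coprod.desc m (𝟙 A)) (coprod.desc (r₁ ≫ m) (𝟙 A)))) ∧
          φ1 ≫ pullback.fst (coprod.map r₂ (𝟙 A))
              (pullback.fst (coprod.desc m (𝟙 A)) (coprod.desc (r₁ ≫ m) (𝟙 A))) =
            pullback.fst (coprod.map r₂ (𝟙 A))
              (coprod.desc (pullback.fst (coprod.desc (𝟙 S) (𝟙 S)) r₁ ≫
                coprod.map (𝟙 S) m) (𝟙 (S ⨿ A))) ∧
          φ1 ≫ pullback.snd (coprod.map r₂ (𝟙 A))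
              (pullback.fst (coprod.desc m (𝟙 A)) (coprod.desc (r₁ ≫ m) (𝟙 A))) =
            pullback.snd (coprod.map r₂ (𝟙 A))
              (coprod.desc (pullback.fst (coprod.desc (𝟙 S) (𝟙 S)) r₁ ≫
                coprod.map (𝟙 S) m) (𝟙 (S ⨿ A))) ≫ β :=
      ⟨_, isPullback_lift_snd β _ _ hβ1, pullback.lift_fst _ _ _,
        pullback.lift_snd _ _ _⟩
    have hφ1re : RegularEpi φ1 := regularEpiSndOfIsPullback hstab' hφ1pb hβre
    -- pasting to get Q = pullback h₁ h₂
    have Pq := IsPullback.paste_vert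
      (IsPullback.of_hasPullback (coprod.map r₂ (𝟙 A))
        (pullback.fst (coprod.desc m (𝟙 A)) (coprod.desc (r₁ ≫ m) (𝟙 A))))
      (IsPullback.of_hasPullback (coprod.desc m (𝟙 A)) (coprod.desc (r₁ ≫ m) (𝟙 A)))
    have hv2w : coprod.map r₂ (𝟙 A) ≫ coprod.desc m (𝟙 A) =
        coprod.desc (r₂ ≫ m) (𝟙 A) := by apply coprod.hom_ext <;> simp
    rw [hv2w] at Pq
    -- pulling back e twice
    obtain ⟨j1, hj1pb, hj11, hj12⟩ :
        ∃ j1 : pullback (coprod.desc (r₂ ≫ m) (𝟙 A)) (coprod.desc (r₁ ≫ m) (𝟙 A)) ⟶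
            pullback (coprod.desc (r₂ ≫ m) (𝟙 A)) (mb ≫ prod.fst),
          IsPullback
            (pullback.snd (coprod.desc (r₂ ≫ m) (𝟙 A)) (coprod.desc (r₁ ≫ m) (𝟙 A)))
            j1 e (pullback.snd (coprod.desc (r₂ ≫ m) (𝟙 A)) (mb ≫ prod.fst)) ∧
          j1 ≫ pullback.fst (coprod.desc (r₂ ≫ m) (𝟙 A)) (mb ≫ prod.fst) =
            pullback.fst (coprod.desc (r₂ ≫ m) (𝟙 A)) (coprod.desc (r₁ ≫ m) (𝟙 A)) ∧
          j1 ≫ pullback.snd (coprod.desc (r₂ ≫ m) (𝟙 A)) (mb ≫ prod.fst) =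
            pullback.snd (coprod.desc (r₂ ≫ m) (𝟙 A)) (coprod.desc (r₁ ≫ m) (𝟙 A)) ≫ e :=
      ⟨_, isPullback_lift_snd e (mb ≫ prod.fst) _ hGfst, pullback.lift_fst _ _ _,
        pullback.lift_snd _ _ _⟩
    have hj1re : RegularEpi j1 := regularEpiSndOfIsPullback hstab' hj1pb he
    obtain ⟨j2, hj2pb, hj21, hj22⟩ :
        ∃ j2 : pullback (coprod.desc (r₂ ≫ m) (𝟙 A)) (mb ≫ prod.fst) ⟶
            pullback (mb ≫ prod.snd) (mb ≫ prod.fst),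
          IsPullback
            (pullback.fst (coprod.desc (r₂ ≫ m) (𝟙 A)) (mb ≫ prod.fst))
            j2 e (pullback.fst (mb ≫ prod.snd) (mb ≫ prod.fst)) ∧
          j2 ≫ pullback.fst (mb ≫ prod.snd) (mb ≫ prod.fst) =
            pullback.fst (coprod.desc (r₂ ≫ m) (𝟙 A)) (mb ≫ prod.fst) ≫ e ∧
          j2 ≫ pullback.snd (mb ≫ prod.snd) (mb ≫ prod.fst) =
            pullback.snd (coprod.desc (r₂ ≫ m) (𝟙 A)) (mb ≫ prod.fst) :=
      ⟨_, isPullback_lift_fst e (mb ≫ prod.snd) _ hGsnd, pullback.lift_fst _ _ _,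
        pullback.lift_snd _ _ _⟩
    have hj2re : RegularEpi j2 := regularEpiSndOfIsPullback hstab' hj2pb he
    -- the total strong epi Φ and its legs
    have hχ2 : coprod.map (coprod.map (pullback.snd r₂ r₁) (𝟙 R)) (coprod.map r₂ (𝟙 A)) ≫
        coprod.map c2 (𝟙 (S ⨿ A)) ≫
        coprod.map (pullback.snd (coprod.desc (𝟙 S) (𝟙 S)) r₁) (coprod.desc m (𝟙 A)) =
        coprod.map (coprod.desc (pullback.snd r₂ r₁) (𝟙 R))
          (coprod.desc (r₂ ≫ m) (𝟙 A)) := by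
      rw [coprod.map_map, coprod.map_map]
      apply coprod.hom_ext
      · simp [reassoc_of% hc22]
      · simp
    obtain ⟨Φ, ⟨hΦse⟩, hΦ1, hΦ2⟩ :
        ∃ Φ : (pullback r₂ r₁ ⨿ R) ⨿ (R ⨿ A) ⟶
            pullback (mb ≫ prod.snd) (mb ≫ prod.fst),
          Nonempty (StrongEpi Φ) ∧
          Φ ≫ pullback.fst (mb ≫ prod.snd) (mb ≫ prod.fst) =
            coprod.desc (coprod.map (pullback.fst r₂ r₁) (r₁ ≫ m)) (𝟙 (R ⨿ A)) ≫ e ∧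
          Φ ≫ pullback.snd (mb ≫ prod.snd) (mb ≫ prod.fst) =
            coprod.map (coprod.desc (pullback.snd r₂ r₁) (𝟙 R))
              (coprod.desc (r₂ ≫ m) (𝟙 A)) ≫ e := by
      haveI := isRegularEpi_of_regularEpi hγre; haveI := isRegularEpi_of_regularEpi hφ2re; haveI := isRegularEpi_of_regularEpi hφ1re; haveI := isRegularEpi_of_regularEpi hj1re; haveI := isRegularEpi_of_regularEpi hj2re
      refine ⟨γ ≫ φ2 ≫ φ1 ≫ Pq.isoPullback.hom ≫ j1 ≫ j2, ⟨?_⟩, ?_, ?_⟩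
      · haveI h5 : StrongEpi (j1 ≫ j2) := strongEpi_comp _ _
        haveI h4 : StrongEpi (Pq.isoPullback.hom ≫ j1 ≫ j2) := strongEpi_comp _ _
        haveI h3 : StrongEpi (φ1 ≫ Pq.isoPullback.hom ≫ j1 ≫ j2) := strongEpi_comp _ _
        haveI h2 : StrongEpi (φ2 ≫ φ1 ≫ Pq.isoPullback.hom ≫ j1 ≫ j2) :=
          strongEpi_comp _ _
        exact strongEpi_comp _ _
      · simp only [Category.assoc, hj21]
        rw [reassoc_of% hj11, reassoc_of% Pq.isoPullback_hom_fst,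
          reassoc_of% hφ11, reassoc_of% hφ21, reassoc_of% hγ1]
      · simp only [Category.assoc, hj22]
        rw [hj12, reassoc_of% Pq.isoPullback_hom_snd,
          reassoc_of% hφ12, reassoc_of% hφ22, reassoc_of% hγ2,
          reassoc_of% hβ2, reassoc_of% hχ2]
    -- final lifting
    haveI := hΦse
    have hE1 : coprod.desc (coprod.desc (t0 ≫ coprod.inl) coprod.inl) (𝟙 (R ⨿ A)) ≫
        coprod.desc (r₁ ≫ m) (𝟙 A) =
        coprod.desc (coprod.map (pullback.fst r₂ r₁) (r₁ ≫ m)) (𝟙 (R ⨿ A)) ≫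
          coprod.desc (r₁ ≫ m) (𝟙 A) := by
      apply coprod.hom_ext
      · apply coprod.hom_ext
        · simp [reassoc_of% ht01]
        · simp
      · simp
    have hE2 : coprod.desc (coprod.desc (t0 ≫ coprod.inl) coprod.inl) (𝟙 (R ⨿ A)) ≫
        coprod.desc (r₂ ≫ m) (𝟙 A) =
        coprod.map (coprod.desc (pullback.snd r₂ r₁) (𝟙 R))
          (coprod.desc (r₂ ≫ m) (𝟙 A)) ≫ coprod.desc (r₂ ≫ m) (𝟙 A) := by
      apply coprod.hom_ext
      · apply coprod.hom_ext
        · simp [reassoc_of% ht02]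
        · simp
      · simp
    have hcomm :
        ((coprod.desc (coprod.desc (t0 ≫ coprod.inl) coprod.inl) (𝟙 (R ⨿ A))) ≫ e) ≫ mb =
        Φ ≫ prod.lift
          (pullback.fst (mb ≫ prod.snd) (mb ≫ prod.fst) ≫ mb ≫ prod.fst)
          (pullback.snd (mb ≫ prod.snd) (mb ≫ prod.fst) ≫ mb ≫ prod.snd) := by
      apply Limits.prod.hom_ext
      · simp only [Category.assoc, prod.lift_fst]
        rw [hGfst, reassoc_of% hΦ1, hGfst, hE1]
      · simp only [Category.assoc, prod.lift_snd]
        rw [hGsnd, reassoc_of% hΦ2, hGsnd, hE2]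
    have sq : CommSq
        ((coprod.desc (coprod.desc (t0 ≫ coprod.inl) coprod.inl) (𝟙 (R ⨿ A))) ≫ e) Φ mb
        (prod.lift
          (pullback.fst (mb ≫ prod.snd) (mb ≫ prod.fst) ≫ mb ≫ prod.fst)
          (pullback.snd (mb ≫ prod.snd) (mb ≫ prod.fst) ≫ mb ≫ prod.snd)) := ⟨hcomm⟩
    refine ⟨sq.lift, ?_, ?_⟩
    · rw [← Category.assoc, sq.fac_right]; simp
    · rw [← Category.assoc, sq.fac_right]; simp
end

section
/- Let C be an exact category satisfying Condition (*). Then the pushout of a monomorphism m : S → A along any regular epimorphism e : S → T exists, this pushout square is also a pullback, and the pushout of m is again a monomorphism. -/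
open CategoryTheory Limits

attribute [local simp] pullback.lift_fst pullback.lift_snd pullback.lift_fst_assoc pullback.lift_snd_assoc
attribute [local simp] prod.lift_fst prod.lift_snd prod.lift_fst_assoc prod.lift_snd_assoc
attribute [local simp] coprod.inl_desc coprod.inr_desc coprod.inl_desc_assoc coprod.inr_desc_assoc

/-- Every internal equivalence relation is effective (a kernel pair): Barr-exactness. -/
def EquivRelsEffective (C : Type*) [CategoryTheory.Category C]
    [CategoryTheory.Limits.HasFiniteLimits C] : Prop :=
  ∀ {R S : C} (r₁ r₂ : R ⟶ S),
    CategoryTheory.Mono (CategoryTheory.Limits.prod.lift r₁ r₂) →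
    (∃ d : S ⟶ R, d ≫ r₁ = 𝟙 S ∧ d ≫ r₂ = 𝟙 S) →
    (∃ s : R ⟶ R, s ≫ r₁ = r₂ ∧ s ≫ r₂ = r₁) →
    (∃ t : CategoryTheory.Limits.pullback r₂ r₁ ⟶ R,
      t ≫ r₁ = CategoryTheory.Limits.pullback.fst r₂ r₁ ≫ r₁ ∧
      t ≫ r₂ = CategoryTheory.Limits.pullback.snd r₂ r₁ ≫ r₂) →
    ∃ (Q : C) (q : S ⟶ Q), CategoryTheory.IsKernelPair q r₁ r₂


section RegEpiHelpers
variable {C : Type*} [Category C]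

/-- Build a `RegularEpi` structure from a pair it coequalizes, epi-ness, and a factorization
property. -/
noncomputable def regEpiMk {X Y W : C} (f : X ⟶ Y) (u v : W ⟶ X) (w : u ≫ f = v ≫ f)
    (hepi : ∀ {Z : C} (a b : Y ⟶ Z), f ≫ a = f ≫ b → a = b)
    (hdesc : ∀ {Z : C} (h : X ⟶ Z), u ≫ h = v ≫ h → ∃ l : Y ⟶ Z, f ≫ l = h) : RegularEpi f where
  W := W
  left := u
  right := v
  w := w
  isColimit := Cofork.IsColimit.mk _
    (fun s => (hdesc s.π s.condition).choose)
    (fun s => (hdesc s.π s.condition).choose_spec)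
    (fun s m hm => by
      apply hepi
      rw [(hdesc s.π s.condition).choose_spec]
      exact hm)

theorem regEpi_cancel {X Y : C} (f : X ⟶ Y) (hf : RegularEpi f) {Z : C} (a b : Y ⟶ Z)
    (h : f ≫ a = f ≫ b) : a = b := by
  haveI := hf
  haveI : Epi f := RegularEpi.epi f hf
  exact (cancel_epi f).mp h

/-- A regular epi factors through anything coequalizing its kernel pair. -/
theorem regEpiDesc [HasPullbacks C] {X Y : C} (f : X ⟶ Y) (hf : RegularEpi f) {Z : C}
    (h : X ⟶ Z) (hh : pullback.fst f f ≫ h = pullback.snd f f ≫ h) :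
    ∃ l : Y ⟶ Z, f ≫ l = h := by
  haveI := hf
  have hl : hf.left ≫ h = hf.right ≫ h := by
    have e1 : pullback.lift hf.left hf.right
        hf.w ≫ pullback.fst f f ≫ h =
        pullback.lift hf.left hf.right hf.w ≫
        pullback.snd f f ≫ h := by rw [hh]
    simpa [pullback.lift_fst_assoc, pullback.lift_snd_assoc] using e1
  obtain ⟨l, hl'⟩ := hf.desc' h hl
  exact ⟨l, hl'⟩

/-- Descend a morphism along a regular epi, checked after composing with a mono. -/
theorem regEpiDescend [HasPullbacks C] {W' W N Z : C} (φ : W' ⟶ W) (hφ : RegularEpi φ)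
    (μ : N ⟶ Z) (hμ : Mono μ) (v : W' ⟶ N) (u : W ⟶ Z) (h : v ≫ μ = φ ≫ u) :
    ∃ v' : W ⟶ N, φ ≫ v' = v ∧ v' ≫ μ = u := by
  have key : pullback.fst φ φ ≫ v = pullback.snd φ φ ≫ v := by
    haveI := hμ
    apply (cancel_mono μ).mp
    rw [Category.assoc, Category.assoc, h, ← Category.assoc, ← Category.assoc,
      pullback.condition]
  obtain ⟨v', hv'⟩ := regEpiDesc φ hφ v key
  refine ⟨v', hv', ?_⟩
  apply regEpi_cancel φ hφ
  rw [← Category.assoc, hv', h]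

noncomputable def regEpi_comp_iso {X Y Z : C} (f : X ⟶ Y) (i : Y ⟶ Z) (hf : RegularEpi f) [IsIso i] :
    RegularEpi (f ≫ i) := by
  haveI := hf
  exact regEpiMk _ hf.left hf.right
    (by rw [← Category.assoc, ← Category.assoc, hf.w])
    (fun a b hab => by
      have : f ≫ (i ≫ a) = f ≫ (i ≫ b) := by simpa using hab
      have := regEpi_cancel f hf _ _ this
      rwa [cancel_epi i] at this)
    (fun h hh => by
      obtain ⟨l, hl⟩ := hf.desc' h hh
      exact ⟨inv i ≫ l, by simp [hl]⟩)

noncomputable def iso_comp_regEpi {X Y Z : C} (i : X ⟶ Y) (f : Y ⟶ Z) [IsIso i] (hf : RegularEpi f) :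
    RegularEpi (i ≫ f) := by
  haveI := hf
  refine regEpiMk _ (hf.left ≫ inv i)
    (hf.right ≫ inv i) (by simp [hf.w]) ?_ ?_
  · intro Z' a b hab
    apply regEpi_cancel f hf
    rwa [← cancel_epi i, ← Category.assoc, ← Category.assoc]
  · intro Z' h hh
    have : hf.left ≫ inv i ≫ h =
        hf.right ≫ inv i ≫ h := by
      rw [← Category.assoc, ← Category.assoc]; exact hh
    obtain ⟨l, hl⟩ := hf.desc' (inv i ≫ h) this
    exact ⟨l, by rw [Category.assoc, hl, ← Category.assoc, IsIso.hom_inv_id, Category.id_comp]⟩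

noncomputable def regEpi_of_isIso {X Y : C} (f : X ⟶ Y) [IsIso f] : RegularEpi f :=
  regEpiMk f (𝟙 X) (𝟙 X) rfl
    (fun a b hab => by rwa [cancel_epi f] at hab)
    (fun h _ => ⟨inv f ≫ h, by simp⟩)

end RegEpiHelpers

section More
variable {C : Type*} [Category C]

/-- Composition of regular epis, given pullback stability. -/
noncomputable def regEpi_comp [HasPullbacks C] (hstab : RegularEpisPullbackStable C)
    {X Y Z : C} (f : X ⟶ Y) (g : Y ⟶ Z) (hf : RegularEpi f) (hg : RegularEpi g) :
    RegularEpi (f ≫ g) := by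
  refine regEpiMk _ (pullback.fst (f ≫ g) (f ≫ g)) (pullback.snd (f ≫ g) (f ≫ g))
    pullback.condition ?_ ?_
  · intro Z' a b hab
    apply regEpi_cancel g hg
    apply regEpi_cancel f hf
    simpa using hab
  · intro Z' h hh
    -- first descend along f
    have h1 : pullback.fst f f ≫ h = pullback.snd f f ≫ h := by
      have w : (pullback.fst f f ≫ f) ≫ g = (pullback.snd f f ≫ f) ≫ g := by
        rw [pullback.condition]
      have : pullback.lift (pullback.fst f f) (pullback.snd f f)
          (by rw [← Category.assoc, ← Category.assoc, pullback.condition]) ≫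
          pullback.fst (f ≫ g) (f ≫ g) ≫ h =
          pullback.lift (pullback.fst f f) (pullback.snd f f)
          (by rw [← Category.assoc, ← Category.assoc, pullback.condition]) ≫
          pullback.snd (f ≫ g) (f ≫ g) ≫ h := by rw [hh]
      simpa [pullback.lift_fst_assoc, pullback.lift_snd_assoc] using this
    obtain ⟨h', hh'⟩ := regEpiDesc f hf h h1
    -- now show kernel pair of g coequalized by h'
    have h2 : pullback.fst g g ≫ h' = pullback.snd g g ≫ h' := by
      obtain ⟨hε₁⟩ := hstab (pullback.fst g g) f hf
      set ε₁ := pullback.fst (pullback.fst g g) f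
      set x₁ := pullback.snd (pullback.fst g g) f
      have c₁ : ε₁ ≫ pullback.fst g g = x₁ ≫ f := pullback.condition
      obtain ⟨hε₂⟩ := hstab (ε₁ ≫ pullback.snd g g) f hf
      set ε₂ := pullback.fst (ε₁ ≫ pullback.snd g g) f
      set x₂ := pullback.snd (ε₁ ≫ pullback.snd g g) f
      have c₂ : ε₂ ≫ ε₁ ≫ pullback.snd g g = x₂ ≫ f := by
        have := pullback.condition (f := ε₁ ≫ pullback.snd g g) (g := f)
        simpa using this
      have key : (ε₂ ≫ x₁) ≫ (f ≫ g) = x₂ ≫ (f ≫ g) := by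
        have pc : pullback.fst g g ≫ g = pullback.snd g g ≫ g := pullback.condition
        calc (ε₂ ≫ x₁) ≫ f ≫ g = ε₂ ≫ (x₁ ≫ f) ≫ g := by simp
          _ = ε₂ ≫ (ε₁ ≫ pullback.fst g g) ≫ g := by rw [c₁]
          _ = ε₂ ≫ ε₁ ≫ pullback.fst g g ≫ g := by simp
          _ = ε₂ ≫ ε₁ ≫ pullback.snd g g ≫ g := by rw [pc]
          _ = (ε₂ ≫ ε₁ ≫ pullback.snd g g) ≫ g := by simp
          _ = (x₂ ≫ f) ≫ g := by rw [c₂]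
          _ = x₂ ≫ f ≫ g := by simp
      have lifted : (ε₂ ≫ x₁) ≫ h = x₂ ≫ h := by
        have := hh
        have e1 : pullback.lift (ε₂ ≫ x₁) x₂ key ≫ pullback.fst (f ≫ g) (f ≫ g) ≫ h =
            pullback.lift (ε₂ ≫ x₁) x₂ key ≫ pullback.snd (f ≫ g) (f ≫ g) ≫ h := by rw [hh]
        simpa [pullback.lift_fst_assoc, pullback.lift_snd_assoc] using e1
      apply regEpi_cancel ε₁ hε₁
      apply regEpi_cancel ε₂ hε₂
      calc ε₂ ≫ ε₁ ≫ pullback.fst g g ≫ h'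
          = ε₂ ≫ (ε₁ ≫ pullback.fst g g) ≫ h' := by simp
        _ = ε₂ ≫ (x₁ ≫ f) ≫ h' := by rw [c₁]
        _ = (ε₂ ≫ x₁) ≫ f ≫ h' := by simp
        _ = (ε₂ ≫ x₁) ≫ h := by rw [hh']
        _ = x₂ ≫ h := lifted
        _ = x₂ ≫ f ≫ h' := by rw [hh']
        _ = (x₂ ≫ f) ≫ h' := by simp
        _ = (ε₂ ≫ ε₁ ≫ pullback.snd g g) ≫ h' := by rw [c₂]
        _ = ε₂ ≫ ε₁ ≫ pullback.snd g g ≫ h' := by simp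
    obtain ⟨h'', hh''⟩ := regEpiDesc g hg h' h2
    exact ⟨h'', by rw [Category.assoc, hh'', hh']⟩

/-- Coproduct of regular epis is a regular epi. -/
noncomputable def regEpi_coprodMap [HasBinaryCoproducts C] {X X' Y Y' : C}
    (f : X ⟶ Y) (f' : X' ⟶ Y') (hf : RegularEpi f) (hf' : RegularEpi f') :
    RegularEpi (coprod.map f f') := by
  haveI := hf; haveI := hf'
  refine regEpiMk _ (coprod.map hf.left hf'.left)
    (coprod.map hf.right hf'.right)
    (by rw [coprod.map_map, coprod.map_map, hf.w, hf'.w]) ?_ ?_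
  · intro Z a b hab
    have h1 : coprod.inl ≫ coprod.map f f' ≫ a = coprod.inl ≫ coprod.map f f' ≫ b := by
      rw [hab]
    have h2 : coprod.inr ≫ coprod.map f f' ≫ a = coprod.inr ≫ coprod.map f f' ≫ b := by
      rw [hab]
    simp only [coprod.inl_map_assoc, coprod.inr_map_assoc] at h1 h2
    have h1' := regEpi_cancel f hf _ _ h1
    have h2' := regEpi_cancel f' hf' _ _ h2
    ext
    · simpa using h1'
    · simpa using h2'
  · intro Z h hh
    have h1 : hf.left ≫ coprod.inl ≫ h =
        hf.right ≫ coprod.inl ≫ h := by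
      have := coprod.inl ≫= hh
      simpa using this
    have h2 : hf'.left ≫ coprod.inr ≫ h =
        hf'.right ≫ coprod.inr ≫ h := by
      have := coprod.inr ≫= hh
      simpa using this
    obtain ⟨l₁, hl₁⟩ := hf.desc' (coprod.inl ≫ h) h1
    obtain ⟨l₂, hl₂⟩ := hf'.desc' (coprod.inr ≫ h) h2
    refine ⟨coprod.desc l₁ l₂, ?_⟩
    ext
    · simpa using hl₁
    · simpa using hl₂

end More

section CovSection
variable {C : Type*} [Category C] [HasPullbacks C]

/-- `(Q, q₁, q₂)` is a cover of the cospan `(f, g)`: it commutes and the comparison map to the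
pullback is a regular epimorphism. -/
def Cov {X Y Z Q : C} (f : X ⟶ Z) (g : Y ⟶ Z) (q₁ : Q ⟶ X) (q₂ : Q ⟶ Y) : Prop :=
  ∃ w : q₁ ≫ f = q₂ ≫ g, Nonempty (RegularEpi (pullback.lift q₁ q₂ w))

theorem cov_of_isPullback {X Y Z Q : C} {f : X ⟶ Z} {g : Y ⟶ Z} {q₁ : Q ⟶ X} {q₂ : Q ⟶ Y}
    (h : IsPullback q₁ q₂ f g) : Cov f g q₁ q₂ := by
  refine ⟨h.w, ⟨?_⟩⟩
  have : pullback.lift q₁ q₂ h.w = h.isoPullback.hom := by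
    apply pullback.hom_ext <;> simp [pullback.lift_fst, pullback.lift_snd]
  rw [this]
  exact regEpi_of_isIso _

theorem cov_symm {X Y Z Q : C} {f : X ⟶ Z} {g : Y ⟶ Z} {q₁ : Q ⟶ X} {q₂ : Q ⟶ Y}
    (h : Cov f g q₁ q₂) : Cov g f q₂ q₁ := by
  obtain ⟨w, ⟨hre⟩⟩ := h
  refine ⟨w.symm, ⟨?_⟩⟩
  have : pullback.lift q₂ q₁ w.symm = pullback.lift q₁ q₂ w ≫ (pullbackSymmetry f g).hom := by
    apply pullback.hom_ext <;> simp [pullback.lift_fst, pullback.lift_snd]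
  rw [this]
  exact regEpi_comp_iso _ _ hre

theorem cov_paste (hstab : RegularEpisPullbackStable C) {X V Z Y Q Q' : C}
    {f : X ⟶ Z} {k : V ⟶ Z} {h : Y ⟶ V} {q₁ : Q ⟶ X} {q₂ : Q ⟶ V}
    (hQ : Cov f k q₁ q₂) {q₁' : Q' ⟶ Q} {q₂' : Q' ⟶ Y} (hQ' : Cov q₂ h q₁' q₂') :
    Cov f (h ≫ k) (q₁' ≫ q₁) q₂' := by
  obtain ⟨w, ⟨hκ⟩⟩ := hQ
  obtain ⟨w', ⟨hκ'⟩⟩ := hQ'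
  set κ := pullback.lift q₁ q₂ w with hκdef
  set κ' := pullback.lift q₁' q₂' w' with hκ'def
  have κfst : κ ≫ pullback.fst f k = q₁ := pullback.lift_fst _ _ _
  have κsnd : κ ≫ pullback.snd f k = q₂ := pullback.lift_snd _ _ _
  have κ'fst : κ' ≫ pullback.fst q₂ h = q₁' := pullback.lift_fst _ _ _
  have κ'snd : κ' ≫ pullback.snd q₂ h = q₂' := pullback.lift_snd _ _ _
  have wζ : pullback.fst f (h ≫ k) ≫ f = (pullback.snd f (h ≫ k) ≫ h) ≫ k := by
    rw [pullback.condition]; simp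
  set ζ : pullback f (h ≫ k) ⟶ pullback f k :=
    pullback.lift (pullback.fst f (h ≫ k)) (pullback.snd f (h ≫ k) ≫ h) wζ with hζdef
  have ζfst : ζ ≫ pullback.fst f k = pullback.fst f (h ≫ k) := pullback.lift_fst _ _ _
  have ζsnd : ζ ≫ pullback.snd f k = pullback.snd f (h ≫ k) ≫ h := pullback.lift_snd _ _ _
  have wθ : (pullback.fst q₂ h ≫ q₁) ≫ f = pullback.snd q₂ h ≫ h ≫ k := by
    rw [Category.assoc, w, ← Category.assoc, pullback.condition, Category.assoc]
  set θ : pullback q₂ h ⟶ pullback f (h ≫ k) :=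
    pullback.lift (pullback.fst q₂ h ≫ q₁) (pullback.snd q₂ h) wθ with hθdef
  have θfst : θ ≫ pullback.fst f (h ≫ k) = pullback.fst q₂ h ≫ q₁ := pullback.lift_fst _ _ _
  have θsnd : θ ≫ pullback.snd f (h ≫ k) = pullback.snd q₂ h := pullback.lift_snd _ _ _
  have sq : θ ≫ ζ = pullback.fst q₂ h ≫ κ := by
    apply pullback.hom_ext
    · simp only [Category.assoc, ζfst, κfst, θfst]
    · simp only [Category.assoc, ζsnd, κsnd]
      rw [← Category.assoc, θsnd, pullback.condition]
  have hpb : IsPullback θ (pullback.fst q₂ h) ζ κ := by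
    refine IsPullback.of_isLimit (PullbackCone.IsLimit.mk sq
      (fun s => pullback.lift s.snd (s.fst ≫ pullback.snd f (h ≫ k)) (by
        have e : (s.fst ≫ ζ) ≫ pullback.snd f k = (s.snd ≫ κ) ≫ pullback.snd f k := by
          rw [s.condition]
        simp only [Category.assoc, ζsnd, κsnd] at e
        simp only [Category.assoc]
        exact e.symm)) ?_ ?_ ?_)
    · intro s
      apply pullback.hom_ext
      · simp only [Category.assoc, θfst]
        rw [← Category.assoc, pullback.lift_fst]
        have e : (s.fst ≫ ζ) ≫ pullback.fst f k = (s.snd ≫ κ) ≫ pullback.fst f k := by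
          rw [s.condition]
        simp only [Category.assoc, ζfst, κfst] at e
        exact e.symm
      · simp only [Category.assoc, θsnd]
        rw [pullback.lift_snd]
    · intro s
      rw [pullback.lift_fst]
    · intro s m hm1 hm2
      apply pullback.hom_ext
      · rw [pullback.lift_fst, hm2]
      · rw [pullback.lift_snd, ← hm1, Category.assoc, θsnd]
  obtain ⟨hθfst'⟩ := hstab ζ κ hκ
  have hθeq : hpb.isoPullback.hom ≫ pullback.fst ζ κ = θ := hpb.isoPullback_hom_fst
  have hθ : RegularEpi θ := by rw [← hθeq]; exact iso_comp_regEpi _ _ hθfst'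
  have wfinal : (q₁' ≫ q₁) ≫ f = q₂' ≫ h ≫ k := by
    rw [Category.assoc, w, ← Category.assoc, w', Category.assoc]
  refine ⟨wfinal, ⟨?_⟩⟩
  have : pullback.lift (q₁' ≫ q₁) q₂' wfinal = κ' ≫ θ := by
    apply pullback.hom_ext
    · simp only [Category.assoc, θfst, pullback.lift_fst]
      rw [← Category.assoc, κ'fst]
    · simp only [Category.assoc, θsnd, pullback.lift_snd]
      exact κ'snd.symm
  rw [this]
  exact regEpi_comp hstab κ' θ hκ' hθ

end CovSection

section CovCoprod
variable {C : Type*} [Category C] [HasPullbacks C] [HasBinaryCoproducts C]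

theorem cov_map (hstab : RegularEpisPullbackStable C) (hb : CoprodOfPullbacksIsPullback C)
    {X Y Z X' Y' Z' Q Q' : C} {f : X ⟶ Z} {g : Y ⟶ Z} {f' : X' ⟶ Z'} {g' : Y' ⟶ Z'}
    {q₁ : Q ⟶ X} {q₂ : Q ⟶ Y} {q₁' : Q' ⟶ X'} {q₂' : Q' ⟶ Y'}
    (hQ : Cov f g q₁ q₂) (hQ' : Cov f' g' q₁' q₂') :
    Cov (coprod.map f f') (coprod.map g g') (coprod.map q₁ q₁') (coprod.map q₂ q₂') := by
  obtain ⟨w, ⟨hκ⟩⟩ := hQ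
  obtain ⟨w', ⟨hκ'⟩⟩ := hQ'
  have hpb := hb (pullback.fst f g) (pullback.snd f g) f g
    (pullback.fst f' g') (pullback.snd f' g') f' g'
    (IsPullback.of_hasPullback f g) (IsPullback.of_hasPullback f' g')
  have wfinal : coprod.map q₁ q₁' ≫ coprod.map f f' = coprod.map q₂ q₂' ≫ coprod.map g g' := by
    rw [coprod.map_map, coprod.map_map, w, w']
  refine ⟨wfinal, ⟨?_⟩⟩
  have : pullback.lift (coprod.map q₁ q₁') (coprod.map q₂ q₂') wfinal =
      coprod.map (pullback.lift q₁ q₂ w) (pullback.lift q₁' q₂' w') ≫ hpb.isoPullback.hom := by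
    apply pullback.hom_ext
    · rw [pullback.lift_fst, Category.assoc, hpb.isoPullback_hom_fst, coprod.map_map,
        pullback.lift_fst, pullback.lift_fst]
    · rw [pullback.lift_snd, Category.assoc, hpb.isoPullback_hom_snd, coprod.map_map,
        pullback.lift_snd, pullback.lift_snd]
  rw [this]
  exact regEpi_comp_iso _ _ (regEpi_coprodMap _ _ hκ hκ')

theorem cov_desc (hstab : RegularEpisPullbackStable C) (hb : CoprodOfPullbacksIsPullback C)
    (hd : RegEpiSquaresAreFeeblePullbacks C)
    {X Y Y' Z Q Q' : C} {f : X ⟶ Z} (hf : RegularEpi f) {g : Y ⟶ Z} {g' : Y' ⟶ Z}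
    {q₁ : Q ⟶ X} {q₂ : Q ⟶ Y} {q₁' : Q' ⟶ X} {q₂' : Q' ⟶ Y'}
    (hQ : Cov f g q₁ q₂) (hQ' : Cov f g' q₁' q₂') :
    Cov f (coprod.desc g g') (coprod.desc q₁ q₁') (coprod.map q₂ q₂') := by
  -- the codiagonal feeble pullback from condition (d)
  obtain ⟨w₀, ⟨h₀⟩⟩ := hd f hf
  have cov₀ : Cov f (coprod.desc (𝟙 Z) (𝟙 Z)) (coprod.desc (𝟙 X) (𝟙 X)) (coprod.map f f) :=
    ⟨w₀, ⟨h₀⟩⟩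
  have covmid := cov_map hstab hb hQ hQ'
  have covres := cov_paste hstab cov₀ covmid
  have e1 : coprod.map g g' ≫ coprod.desc (𝟙 Z) (𝟙 Z) = coprod.desc g g' := by
    rw [coprod.map_desc]; simp
  have e2 : coprod.map q₁ q₁' ≫ coprod.desc (𝟙 X) (𝟙 X) = coprod.desc q₁ q₁' := by
    rw [coprod.map_desc]; simp
  rw [e1, e2] at covres
  exact covres

end CovCoprod
set_option maxHeartbeats 1600000 in
/-- Let `C` be an exact category satisfying Condition (*). Then the pushout of a
monomorphism `m : S ⟶ A` along any regular epimorphism `e : S ⟶ T` exists, the pushout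
square is also a pullback, and the pushout of `m` is again a monomorphism. -/
theorem pushout_of_mono_along_regularEpi {C : Type*} [Category C]
    [HasFiniteLimits C] (hcoeq : HasKernelPairCoequalizers C)
    (hstab : RegularEpisPullbackStable C) (hexact : EquivRelsEffective C)
    [HasFiniteCoproducts C]
    (hb : CoprodOfPullbacksIsPullback C) (hc : MonoSquaresArePullbacks C)
    (hd : RegEpiSquaresAreFeeblePullbacks C)
    {S A T : C} (m : S ⟶ A) [Mono m] (e : S ⟶ T) (_ : RegularEpi e) :
    ∃ (B : C) (p : A ⟶ B) (n : T ⟶ B),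
      IsPushout e m n p ∧ IsPullback e m n p ∧ Mono n := by
  have he : RegularEpi e := by assumption
  haveI : Epi e := RegularEpi.epi e he
  -- kernel pair of e
  set r₁ := pullback.fst e e with hr₁def
  set r₂ := pullback.snd e e with hr₂def
  have re : r₁ ≫ e = r₂ ≫ e := pullback.condition
  obtain ⟨hr₁0⟩ := hstab e e he
  have hr₁ : RegularEpi r₁ := hr₁0
  clear_value r₁ r₂
  set g₁ := coprod.desc (𝟙 A) (r₁ ≫ m) with hg₁def
  set g₂ := coprod.desc (𝟙 A) (r₂ ≫ m) with hg₂def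
  haveI hse₂ : IsSplitEpi g₂ := IsSplitEpi.mk' ⟨coprod.inl, by simp [hg₂def]⟩
  have hg₂re : RegularEpi g₂ := RegularEpi.ofSplitEpi g₂
  clear_value g₁ g₂
  -- image factorization of ⟨g₁, g₂⟩
  set k := prod.lift g₁ g₂ with hkdef
  clear_value k
  haveI := hcoeq k
  set c := coequalizer.π (pullback.fst k k) (pullback.snd k k) with hcdef
  have hcre : RegularEpi c := coequalizerRegular _ _
  have ccond : pullback.fst k k ≫ c = pullback.snd k k ≫ c := coequalizer.condition _ _
  set ρ := coequalizer.desc k pullback.condition with hρdef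
  have cρ : c ≫ ρ = k := coequalizer.π_desc _ _
  have cdesc : ∀ {Z' : C} (h : A ⨿ pullback e e ⟶ Z'),
      pullback.fst k k ≫ h = pullback.snd k k ≫ h →
      ∃ l, c ≫ l = h := by
    intro Z' h hh
    exact ⟨coequalizer.desc h hh, coequalizer.π_desc _ _⟩
  clear_value c ρ
  set ρ₁ := ρ ≫ prod.fst with hρ₁def
  set ρ₂ := ρ ≫ prod.snd with hρ₂def
  have cρ₁ : c ≫ ρ₁ = g₁ := by rw [hρ₁def, ← Category.assoc, cρ, hkdef, prod.lift_fst]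
  have cρ₂ : c ≫ ρ₂ = g₂ := by rw [hρ₂def, ← Category.assoc, cρ, hkdef, prod.lift_snd]
  -- the image is a mono
  have monoρ : Mono ρ := by
    constructor
    intro Z' u v huv
    obtain ⟨hε₁⟩ := hstab u c hcre
    set ε₁ := pullback.fst u c with hε₁def
    set x₁ := pullback.snd u c with hx₁def
    have c₁ : ε₁ ≫ u = x₁ ≫ c := pullback.condition
    obtain ⟨hε₂⟩ := hstab (ε₁ ≫ v) c hcre
    set ε₂ := pullback.fst (ε₁ ≫ v) c with hε₂def
    set y₁ := pullback.snd (ε₁ ≫ v) c with hy₁def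
    have c₂ : ε₂ ≫ ε₁ ≫ v = y₁ ≫ c := by
      have := pullback.condition (f := ε₁ ≫ v) (g := c)
      simpa using this
    have hk : (ε₂ ≫ x₁) ≫ k = y₁ ≫ k := by
      calc (ε₂ ≫ x₁) ≫ k = (ε₂ ≫ x₁) ≫ c ≫ ρ := by rw [cρ]
        _ = ε₂ ≫ (x₁ ≫ c) ≫ ρ := by simp
        _ = ε₂ ≫ (ε₁ ≫ u) ≫ ρ := by rw [c₁]
        _ = ε₂ ≫ ε₁ ≫ u ≫ ρ := by simp
        _ = ε₂ ≫ ε₁ ≫ v ≫ ρ := by rw [huv]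
        _ = (ε₂ ≫ ε₁ ≫ v) ≫ ρ := by simp
        _ = (y₁ ≫ c) ≫ ρ := by rw [c₂]
        _ = y₁ ≫ c ≫ ρ := by simp
        _ = y₁ ≫ k := by rw [cρ]
    have hxy : (ε₂ ≫ x₁) ≫ c = y₁ ≫ c := by
      have hl1 : pullback.lift (ε₂ ≫ x₁) y₁ hk ≫ pullback.fst k k = ε₂ ≫ x₁ :=
        pullback.lift_fst _ _ _
      have hl2 : pullback.lift (ε₂ ≫ x₁) y₁ hk ≫ pullback.snd k k = y₁ :=
        pullback.lift_snd _ _ _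
      calc (ε₂ ≫ x₁) ≫ c = pullback.lift (ε₂ ≫ x₁) y₁ hk ≫ pullback.fst k k ≫ c := by
            rw [← Category.assoc, hl1]
        _ = pullback.lift (ε₂ ≫ x₁) y₁ hk ≫ pullback.snd k k ≫ c := by
            rw [ccond]
        _ = y₁ ≫ c := by rw [← Category.assoc, hl2]
    apply regEpi_cancel ε₁ hε₁
    apply regEpi_cancel ε₂ hε₂
    calc ε₂ ≫ ε₁ ≫ u = ε₂ ≫ x₁ ≫ c := by rw [c₁]
      _ = (ε₂ ≫ x₁) ≫ c := by simp
      _ = y₁ ≫ c := hxy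
      _ = ε₂ ≫ ε₁ ≫ v := c₂.symm
  have monoρ12 : Mono (prod.lift ρ₁ ρ₂) := by
    have : prod.lift ρ₁ ρ₂ = ρ := by
      rw [hρ₁def, hρ₂def, ← prod.comp_lift, prod.lift_fst_snd, Category.comp_id]
    rwa [this]
  clear_value ρ₁ ρ₂
  -- the fundamental pullback squares (from conditions (b) and (c))
  have pb1 : ∀ r : pullback e e ⟶ S,
      IsPullback (coprod.desc (𝟙 S) r) (coprod.map m (𝟙 (pullback e e))) m
        (coprod.desc (𝟙 A) (r ≫ m)) := by
    intro r
    have sq1 : IsPullback (𝟙 S) m m (𝟙 A) := IsPullback.of_horiz_isIso ⟨by simp⟩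
    have sq2 : IsPullback r (𝟙 (pullback e e)) (𝟙 S) r := IsPullback.of_vert_isIso ⟨by simp⟩
    have hbr := hb _ _ _ _ _ _ _ _ sq1 sq2
    have hcm := hc m inferInstance
    have hres := hbr.paste_horiz hcm
    have e1 : coprod.map (𝟙 S) r ≫ coprod.desc (𝟙 S) (𝟙 S) = coprod.desc (𝟙 S) r := by
      rw [coprod.map_desc]; simp
    have e2 : coprod.map (𝟙 A) r ≫ coprod.desc (𝟙 A) m = coprod.desc (𝟙 A) (r ≫ m) := by
      rw [coprod.map_desc]; simp
    rwa [e1, e2] at hres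
  have pb1g₁ : IsPullback (coprod.desc (𝟙 S) r₁) (coprod.map m (𝟙 (pullback e e))) m g₁ := by
    rw [hg₁def]; exact pb1 r₁
  have pb1g₂ : IsPullback (coprod.desc (𝟙 S) r₂) (coprod.map m (𝟙 (pullback e e))) m g₂ := by
    rw [hg₂def]; exact pb1 r₂
  -- key lifting lemma
  have lem2 : ∀ {W : C} (u : W ⟶ S) (h : W ⟶ coequalizer (pullback.fst k k) (pullback.snd k k))
      (hh : h ≫ ρ₁ = u ≫ m),
      ∃ v : W ⟶ S, v ≫ m = h ≫ ρ₂ ∧ v ≫ e = u ≫ e := by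
    intro W u h hh
    obtain ⟨hε⟩ := hstab h c hcre
    set ε := pullback.fst h c with hεdef
    set kk := pullback.snd h c with hkkdef
    have cc : ε ≫ h = kk ≫ c := pullback.condition
    have hcone : (ε ≫ u) ≫ m = kk ≫ g₁ := by
      calc (ε ≫ u) ≫ m = ε ≫ u ≫ m := by simp
        _ = ε ≫ h ≫ ρ₁ := by rw [hh]
        _ = (ε ≫ h) ≫ ρ₁ := by simp
        _ = (kk ≫ c) ≫ ρ₁ := by rw [cc]
        _ = kk ≫ c ≫ ρ₁ := by simp
        _ = kk ≫ g₁ := by rw [cρ₁]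
    set lam := pb1g₁.lift (ε ≫ u) kk hcone with hlamdef
    have lam1 : lam ≫ coprod.desc (𝟙 S) r₁ = ε ≫ u := pb1g₁.lift_fst _ _ _
    have lam2 : lam ≫ coprod.map m (𝟙 (pullback e e)) = kk := pb1g₁.lift_snd _ _ _
    have emap : coprod.desc (𝟙 S) r₂ ≫ m = coprod.map m (𝟙 (pullback e e)) ≫ g₂ := by
      ext <;> simp [hg₂def]
    have key1 : (lam ≫ coprod.desc (𝟙 S) r₂) ≫ m = ε ≫ (h ≫ ρ₂) := by
      calc (lam ≫ coprod.desc (𝟙 S) r₂) ≫ m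
          = lam ≫ coprod.desc (𝟙 S) r₂ ≫ m := by simp
        _ = lam ≫ coprod.map m (𝟙 (pullback e e)) ≫ g₂ := by rw [emap]
        _ = (lam ≫ coprod.map m (𝟙 (pullback e e))) ≫ g₂ := by simp
        _ = kk ≫ g₂ := by rw [lam2]
        _ = kk ≫ c ≫ ρ₂ := by rw [cρ₂]
        _ = (kk ≫ c) ≫ ρ₂ := by simp
        _ = (ε ≫ h) ≫ ρ₂ := by rw [cc]
        _ = ε ≫ h ≫ ρ₂ := by simp
    obtain ⟨v, hv1, hv2⟩ := regEpiDescend ε hε m inferInstance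
      (lam ≫ coprod.desc (𝟙 S) r₂) (h ≫ ρ₂) key1
    refine ⟨v, hv2, ?_⟩
    apply regEpi_cancel ε hε
    have d2e : coprod.desc (𝟙 S) r₂ ≫ e = coprod.desc (𝟙 S) r₁ ≫ e := by
      ext
      · simp
      · simp only [coprod.inr_desc_assoc]
        rw [← re]
    calc ε ≫ v ≫ e = (ε ≫ v) ≫ e := by simp
      _ = (lam ≫ coprod.desc (𝟙 S) r₂) ≫ e := by rw [hv1]
      _ = lam ≫ coprod.desc (𝟙 S) r₂ ≫ e := by simp
      _ = lam ≫ coprod.desc (𝟙 S) r₁ ≫ e := by rw [d2e]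
      _ = (lam ≫ coprod.desc (𝟙 S) r₁) ≫ e := by simp
      _ = (ε ≫ u) ≫ e := by rw [lam1]
      _ = ε ≫ u ≫ e := by simp
  -- reflexivity
  have hrefl : (coprod.inl ≫ c) ≫ ρ₁ = 𝟙 A ∧ (coprod.inl ≫ c) ≫ ρ₂ = 𝟙 A := by
    constructor
    · rw [Category.assoc, cρ₁, hg₁def, coprod.inl_desc]
    · rw [Category.assoc, cρ₂, hg₂def, coprod.inl_desc]
  -- symmetry
  set swR := pullback.lift r₂ r₁ re.symm with hswRdef
  have swR1 : swR ≫ r₁ = r₂ := by rw [hr₁def]; exact pullback.lift_fst _ _ _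
  have swR2 : swR ≫ r₂ = r₁ := by rw [hr₂def]; exact pullback.lift_snd _ _ _
  have swg₁ : coprod.map (𝟙 A) swR ≫ g₁ = g₂ := by
    ext
    · simp [hg₁def, hg₂def]
    · simp only [hg₁def, hg₂def, coprod.inr_map_assoc, coprod.inr_desc]
      rw [← Category.assoc, swR1]
  have swg₂ : coprod.map (𝟙 A) swR ≫ g₂ = g₁ := by
    ext
    · simp [hg₁def, hg₂def]
    · simp only [hg₁def, hg₂def, coprod.inr_map_assoc, coprod.inr_desc]
      rw [← Category.assoc, swR2]
  have hsymm : ∃ sm, sm ≫ ρ₁ = ρ₂ ∧ sm ≫ ρ₂ = ρ₁ := by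
    have hsw : (coprod.map (𝟙 A) swR ≫ c) ≫ prod.lift ρ₁ ρ₂ = c ≫ prod.lift ρ₂ ρ₁ := by
      apply Limits.prod.hom_ext
      · simp only [Category.assoc, prod.lift_fst, prod.lift_snd, prod.comp_lift]
        rw [cρ₁, cρ₂, swg₁]
      · simp only [Category.assoc, prod.lift_fst, prod.lift_snd, prod.comp_lift]
        rw [cρ₂, cρ₁, swg₂]
    obtain ⟨sm, hsm1, hsm2⟩ := regEpiDescend c hcre (prod.lift ρ₁ ρ₂) monoρ12
      (coprod.map (𝟙 A) swR ≫ c) (prod.lift ρ₂ ρ₁) hsw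
    refine ⟨sm, ?_, ?_⟩
    · have := hsm2 =≫ prod.fst
      simpa using this
    · have := hsm2 =≫ prod.snd
      simpa using this
  -- transitivity via the covers
  set Vf := pullback.fst r₁ r₂ with hVfdef
  set Vs := pullback.snd r₁ r₂ with hVsdef
  have Vcond : Vf ≫ r₁ = Vs ≫ r₂ := pullback.condition
  have wtv : (Vs ≫ r₁) ≫ e = (Vf ≫ r₂) ≫ e := by
    calc (Vs ≫ r₁) ≫ e = Vs ≫ r₁ ≫ e := by simp
      _ = Vs ≫ r₂ ≫ e := by rw [re]
      _ = (Vs ≫ r₂) ≫ e := by simp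
      _ = (Vf ≫ r₁) ≫ e := by rw [Vcond]
      _ = Vf ≫ r₁ ≫ e := by simp
      _ = Vf ≫ r₂ ≫ e := by rw [re]
      _ = (Vf ≫ r₂) ≫ e := by simp
  set tv := pullback.lift (Vs ≫ r₁) (Vf ≫ r₂) wtv with htvdef
  have tv1 : tv ≫ r₁ = Vs ≫ r₁ := by
    have h := pullback.lift_fst (Vs ≫ r₁) (Vf ≫ r₂) wtv
    rw [← hr₁def] at h
    rw [htvdef]
    exact h
  have tv2 : tv ≫ r₂ = Vf ≫ r₂ := by
    have h := pullback.lift_snd (Vs ≫ r₁) (Vf ≫ r₂) wtv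
    rw [← hr₂def] at h
    rw [htvdef]
    exact h
  clear_value tv
  have cov1 : Cov g₂ (𝟙 A) (𝟙 (A ⨿ pullback e e)) g₂ :=
    cov_of_isPullback (IsPullback.of_horiz_isIso ⟨by simp⟩)
  have covm : Cov g₂ m (coprod.map m (𝟙 (pullback e e))) (coprod.desc (𝟙 S) r₂) :=
    cov_of_isPullback pb1g₂.flip
  have covV : Cov r₁ r₂ Vf Vs := cov_of_isPullback (IsPullback.of_hasPullback r₁ r₂)
  have covr1id : Cov r₁ (𝟙 S) (𝟙 (pullback e e)) r₁ :=
    cov_of_isPullback (IsPullback.of_horiz_isIso ⟨by simp⟩)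
  have covdesc1 := cov_desc hstab hb hd hr₁ covr1id covV
  have covsym := cov_symm covdesc1
  have covg2r1m := cov_paste hstab covm covsym
  set q1t := coprod.desc (𝟙 (A ⨿ pullback e e))
    (coprod.map r₁ Vs ≫ coprod.map m (𝟙 (pullback e e))) with hq1tdef
  set q2t := coprod.map g₂ (coprod.desc (𝟙 (pullback e e)) Vf) with hq2tdef
  have covTotal : Cov g₂ g₁ q1t q2t := by
    rw [hq1tdef, hq2tdef, hg₁def]
    exact cov_desc hstab hb hd hg₂re cov1 covg2r1m
  clear_value q1t q2t
  obtain ⟨wT, ⟨hκT⟩⟩ := covTotal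
  set κT := pullback.lift q1t q2t wT with hκTdef
  have κTfst : κT ≫ pullback.fst g₂ g₁ = q1t := pullback.lift_fst _ _ _
  have κTsnd : κT ≫ pullback.snd g₂ g₁ = q2t := pullback.lift_snd _ _ _
  clear_value κT
  set τ₀ := coprod.desc (𝟙 (A ⨿ pullback e e))
    (coprod.desc coprod.inr (tv ≫ coprod.inr)) with hτ₀def
  have inlg₁ : (coprod.inl : A ⟶ A ⨿ pullback e e) ≫ g₁ = 𝟙 A := by
    rw [hg₁def]; exact coprod.inl_desc _ _
  have inrg₁ : (coprod.inr : pullback e e ⟶ A ⨿ pullback e e) ≫ g₁ = r₁ ≫ m := by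
    rw [hg₁def]; exact coprod.inr_desc _ _
  have inlg₂ : (coprod.inl : A ⟶ A ⨿ pullback e e) ≫ g₂ = 𝟙 A := by
    rw [hg₂def]; exact coprod.inl_desc _ _
  have inrg₂ : (coprod.inr : pullback e e ⟶ A ⨿ pullback e e) ≫ g₂ = r₂ ≫ m := by
    rw [hg₂def]; exact coprod.inr_desc _ _
  have τeq1 : τ₀ ≫ g₁ = q1t ≫ g₁ := by
    apply coprod.hom_ext
    · rw [← Category.assoc, ← Category.assoc, hτ₀def, hq1tdef, coprod.inl_desc,
        coprod.inl_desc]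
    · rw [← Category.assoc, ← Category.assoc, hτ₀def, hq1tdef, coprod.inr_desc,
        coprod.inr_desc]
      apply coprod.hom_ext
      · simp [hg₁def]
      · simp [hg₁def, reassoc_of% tv1]
  have τeq2 : τ₀ ≫ g₂ = q2t ≫ g₂ := by
    apply coprod.hom_ext
    · simp [hτ₀def, hq2tdef, hg₂def]
    · rw [← Category.assoc, ← Category.assoc, hτ₀def, hq2tdef, coprod.inr_desc,
        coprod.inr_map]
      apply coprod.hom_ext
      · simp [hg₂def]
      · simp [hg₂def, reassoc_of% tv2]
  clear_value τ₀
  have htrans : ∃ t : pullback ρ₂ ρ₁ ⟶ coequalizer (pullback.fst k k) (pullback.snd k k),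
      t ≫ ρ₁ = pullback.fst ρ₂ ρ₁ ≫ ρ₁ ∧ t ≫ ρ₂ = pullback.snd ρ₂ ρ₁ ≫ ρ₂ := by
    obtain ⟨hε₁⟩ := hstab (pullback.fst ρ₂ ρ₁) c hcre
    set ε₁ := pullback.fst (pullback.fst ρ₂ ρ₁) c with hε₁d
    set a₁ := pullback.snd (pullback.fst ρ₂ ρ₁) c with ha₁d
    have c₁' : ε₁ ≫ pullback.fst ρ₂ ρ₁ = a₁ ≫ c := pullback.condition
    obtain ⟨hε₂⟩ := hstab (ε₁ ≫ pullback.snd ρ₂ ρ₁) c hcre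
    set ε₂ := pullback.fst (ε₁ ≫ pullback.snd ρ₂ ρ₁) c with hε₂d
    set b₁ := pullback.snd (ε₁ ≫ pullback.snd ρ₂ ρ₁) c with hb₁d
    have c₂' : ε₂ ≫ ε₁ ≫ pullback.snd ρ₂ ρ₁ = b₁ ≫ c := by
      have := pullback.condition (f := ε₁ ≫ pullback.snd ρ₂ ρ₁) (g := c)
      simpa using this
    have wab : (ε₂ ≫ a₁) ≫ g₂ = b₁ ≫ g₁ := by
      calc (ε₂ ≫ a₁) ≫ g₂ = ε₂ ≫ a₁ ≫ c ≫ ρ₂ := by rw [cρ₂]; simp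
        _ = ε₂ ≫ (a₁ ≫ c) ≫ ρ₂ := by simp
        _ = ε₂ ≫ (ε₁ ≫ pullback.fst ρ₂ ρ₁) ≫ ρ₂ := by rw [c₁']
        _ = ε₂ ≫ ε₁ ≫ pullback.fst ρ₂ ρ₁ ≫ ρ₂ := by simp
        _ = ε₂ ≫ ε₁ ≫ pullback.snd ρ₂ ρ₁ ≫ ρ₁ := by rw [pullback.condition]
        _ = (ε₂ ≫ ε₁ ≫ pullback.snd ρ₂ ρ₁) ≫ ρ₁ := by simp
        _ = (b₁ ≫ c) ≫ ρ₁ := by rw [c₂']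
        _ = b₁ ≫ c ≫ ρ₁ := by simp
        _ = b₁ ≫ g₁ := by rw [cρ₁]
    set L := pullback.lift (ε₂ ≫ a₁) b₁ wab with hLdef
    have Lfst : L ≫ pullback.fst g₂ g₁ = ε₂ ≫ a₁ := pullback.lift_fst _ _ _
    have Lsnd : L ≫ pullback.snd g₂ g₁ = b₁ := pullback.lift_snd _ _ _
    obtain ⟨hε₃⟩ := hstab L κT hκT
    set ε₃ := pullback.fst L κT with hε₃d
    set ξ := pullback.snd L κT with hξd
    have c₃ : ε₃ ≫ L = ξ ≫ κT := pullback.condition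
    have hΦ : RegularEpi (ε₃ ≫ ε₂ ≫ ε₁) :=
      regEpi_comp hstab _ _ hε₃ (regEpi_comp hstab _ _ hε₂ hε₁)
    have keyτ : (ξ ≫ τ₀ ≫ c) ≫ prod.lift ρ₁ ρ₂ = (ε₃ ≫ ε₂ ≫ ε₁) ≫
        prod.lift (pullback.fst ρ₂ ρ₁ ≫ ρ₁) (pullback.snd ρ₂ ρ₁ ≫ ρ₂) := by
      apply Limits.prod.hom_ext
      · simp only [Category.assoc, prod.lift_fst]
        calc ξ ≫ τ₀ ≫ c ≫ ρ₁ = ξ ≫ τ₀ ≫ g₁ := by rw [cρ₁]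
          _ = ξ ≫ q1t ≫ g₁ := by rw [τeq1]
          _ = ξ ≫ (κT ≫ pullback.fst g₂ g₁) ≫ g₁ := by rw [κTfst]
          _ = (ξ ≫ κT) ≫ pullback.fst g₂ g₁ ≫ g₁ := by simp
          _ = (ε₃ ≫ L) ≫ pullback.fst g₂ g₁ ≫ g₁ := by rw [c₃]
          _ = ε₃ ≫ (L ≫ pullback.fst g₂ g₁) ≫ g₁ := by simp
          _ = ε₃ ≫ (ε₂ ≫ a₁) ≫ g₁ := by rw [Lfst]
          _ = ε₃ ≫ ε₂ ≫ a₁ ≫ c ≫ ρ₁ := by rw [cρ₁]; simp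
          _ = ε₃ ≫ ε₂ ≫ (a₁ ≫ c) ≫ ρ₁ := by simp
          _ = ε₃ ≫ ε₂ ≫ (ε₁ ≫ pullback.fst ρ₂ ρ₁) ≫ ρ₁ := by rw [c₁']
          _ = (ε₃ ≫ ε₂ ≫ ε₁) ≫ pullback.fst ρ₂ ρ₁ ≫ ρ₁ := by simp
          _ = ε₃ ≫ ε₂ ≫ ε₁ ≫ pullback.fst ρ₂ ρ₁ ≫ ρ₁ := by simp
      · simp only [Category.assoc, prod.lift_snd]
        calc ξ ≫ τ₀ ≫ c ≫ ρ₂ = ξ ≫ τ₀ ≫ g₂ := by rw [cρ₂]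
          _ = ξ ≫ q2t ≫ g₂ := by rw [τeq2]
          _ = ξ ≫ (κT ≫ pullback.snd g₂ g₁) ≫ g₂ := by rw [κTsnd]
          _ = (ξ ≫ κT) ≫ pullback.snd g₂ g₁ ≫ g₂ := by simp
          _ = (ε₃ ≫ L) ≫ pullback.snd g₂ g₁ ≫ g₂ := by rw [c₃]
          _ = ε₃ ≫ (L ≫ pullback.snd g₂ g₁) ≫ g₂ := by simp
          _ = ε₃ ≫ b₁ ≫ g₂ := by rw [Lsnd]
          _ = ε₃ ≫ b₁ ≫ c ≫ ρ₂ := by rw [cρ₂]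
          _ = ε₃ ≫ (b₁ ≫ c) ≫ ρ₂ := by simp
          _ = ε₃ ≫ (ε₂ ≫ ε₁ ≫ pullback.snd ρ₂ ρ₁) ≫ ρ₂ := by rw [c₂']
          _ = (ε₃ ≫ ε₂ ≫ ε₁) ≫ pullback.snd ρ₂ ρ₁ ≫ ρ₂ := by simp
          _ = ε₃ ≫ ε₂ ≫ ε₁ ≫ pullback.snd ρ₂ ρ₁ ≫ ρ₂ := by simp
    obtain ⟨t, ht1, ht2⟩ := regEpiDescend (ε₃ ≫ ε₂ ≫ ε₁) hΦ (prod.lift ρ₁ ρ₂) monoρ12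
      (ξ ≫ τ₀ ≫ c)
      (prod.lift (pullback.fst ρ₂ ρ₁ ≫ ρ₁) (pullback.snd ρ₂ ρ₁ ≫ ρ₂)) keyτ
    refine ⟨t, ?_, ?_⟩
    · have := ht2 =≫ prod.fst
      simpa using this
    · have := ht2 =≫ prod.snd
      simpa using this
  -- exactness: the relation is a kernel pair
  obtain ⟨Qo, q, hq⟩ := hexact ρ₁ ρ₂ monoρ12 ⟨coprod.inl ≫ c, hrefl⟩ hsymm htrans
  haveI := hcoeq q
  set p := coequalizer.π (pullback.fst q q) (pullback.snd q q) with hpdef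
  have hpre : RegularEpi p := coequalizerRegular _ _
  have pcond : pullback.fst q q ≫ p = pullback.snd q q ≫ p := coequalizer.condition _ _
  have pdesc0 : ∀ {Z' : C} (h : A ⟶ Z'), pullback.fst q q ≫ h = pullback.snd q q ≫ h →
      ∃ l, p ≫ l = h := by
    intro Z' h hh
    exact ⟨coequalizer.desc h hh, coequalizer.π_desc _ _⟩
  clear_value p
  have ψ1 : hq.isoPullback.hom ≫ pullback.fst q q = ρ₁ := hq.isoPullback_hom_fst
  have ψ2 : hq.isoPullback.hom ≫ pullback.snd q q = ρ₂ := hq.isoPullback_hom_snd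
  have pcoeq : ρ₁ ≫ p = ρ₂ ≫ p := by
    calc ρ₁ ≫ p = (hq.isoPullback.hom ≫ pullback.fst q q) ≫ p := by rw [ψ1]
      _ = hq.isoPullback.hom ≫ pullback.fst q q ≫ p := by simp
      _ = hq.isoPullback.hom ≫ pullback.snd q q ≫ p := by rw [pcond]
      _ = (hq.isoPullback.hom ≫ pullback.snd q q) ≫ p := by simp
      _ = ρ₂ ≫ p := by rw [ψ2]
  have pdesc : ∀ {Z' : C} (h : A ⟶ Z'), ρ₁ ≫ h = ρ₂ ≫ h → ∃ l, p ≫ l = h := by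
    intro Z' h hh
    apply pdesc0
    apply (cancel_epi hq.isoPullback.hom).mp
    rw [← Category.assoc, ← Category.assoc, ψ1, ψ2, hh]
  obtain ⟨uq, huq⟩ := pdesc q hq.w
  have kerp : IsPullback ρ₁ ρ₂ p p := by
    refine IsPullback.of_isLimit (PullbackCone.IsLimit.mk pcoeq
      (fun s => hq.lift s.fst s.snd (by
        simp only [← huq]
        rw [← Category.assoc, ← Category.assoc, s.condition]))
      (fun s => hq.lift_fst _ _ _) (fun s => hq.lift_snd _ _ _) ?_)
    intro s mm hm1 hm2
    haveI := monoρ12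
    apply (cancel_mono (prod.lift ρ₁ ρ₂)).mp
    apply Limits.prod.hom_ext
    · simp only [Category.assoc, prod.lift_fst]
      rw [hm1, hq.lift_fst]
    · simp only [Category.assoc, prod.lift_snd]
      rw [hm2, hq.lift_snd]
  -- construct n
  have rmp : pullback.fst e e ≫ m ≫ p = pullback.snd e e ≫ m ≫ p := by
    rw [← hr₁def, ← hr₂def]
    calc r₁ ≫ m ≫ p = (r₁ ≫ m) ≫ p := by simp
      _ = (coprod.inr ≫ g₁) ≫ p := by rw [inrg₁]
      _ = coprod.inr ≫ (c ≫ ρ₁) ≫ p := by rw [cρ₁]; simp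
      _ = coprod.inr ≫ c ≫ ρ₁ ≫ p := by simp
      _ = coprod.inr ≫ c ≫ ρ₂ ≫ p := by rw [pcoeq]
      _ = coprod.inr ≫ (c ≫ ρ₂) ≫ p := by simp
      _ = (coprod.inr ≫ g₂) ≫ p := by rw [cρ₂]; simp
      _ = (r₂ ≫ m) ≫ p := by rw [inrg₂]
      _ = r₂ ≫ m ≫ p := by simp
  obtain ⟨n, hn⟩ := regEpiDesc e he (m ≫ p) rmp
  -- pushout
  have hra : ∀ s : PushoutCocone e m, ρ₁ ≫ s.inr = ρ₂ ≫ s.inr := by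
    intro s
    apply regEpi_cancel c hcre
    rw [← Category.assoc, ← Category.assoc, cρ₁, cρ₂]
    apply coprod.hom_ext
    · rw [← Category.assoc, ← Category.assoc, inlg₁, inlg₂]
    · rw [← Category.assoc, ← Category.assoc, inrg₁, inrg₂]
      calc (r₁ ≫ m) ≫ s.inr = r₁ ≫ m ≫ s.inr := by simp
        _ = r₁ ≫ e ≫ s.inl := by rw [s.condition]
        _ = (r₁ ≫ e) ≫ s.inl := by simp
        _ = (r₂ ≫ e) ≫ s.inl := by rw [re]
        _ = r₂ ≫ e ≫ s.inl := by simp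
        _ = r₂ ≫ m ≫ s.inr := by rw [s.condition]
        _ = (r₂ ≫ m) ≫ s.inr := by simp
  have hpush : IsPushout e m n p := by
    refine IsPushout.of_isColimit (PushoutCocone.IsColimit.mk hn
      (fun s => (pdesc s.inr (hra s)).choose) ?_
      (fun s => (pdesc s.inr (hra s)).choose_spec) ?_)
    · intro s
      apply (cancel_epi e).mp
      rw [← Category.assoc, hn, Category.assoc, (pdesc s.inr (hra s)).choose_spec,
        s.condition]
    · intro s mm hm1 hm2
      haveI := RegularEpi.epi p hpre
      apply (cancel_epi p).mp
      rw [hm2, (pdesc s.inr (hra s)).choose_spec]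
  -- pullback
  have keylift : ∀ {X' : C} (a : X' ⟶ T) (b : X' ⟶ A), a ≫ n = b ≫ p →
      ∃ x : X' ⟶ S, x ≫ e = a ∧ x ≫ m = b := by
    intro X' a b hab
    obtain ⟨hw⟩ := hstab a e he
    set w := pullback.fst a e with hwdef
    set s0 := pullback.snd a e with hs0def
    have cw : w ≫ a = s0 ≫ e := pullback.condition
    have hcone : (s0 ≫ m) ≫ p = (w ≫ b) ≫ p := by
      calc (s0 ≫ m) ≫ p = s0 ≫ m ≫ p := by simp
        _ = s0 ≫ e ≫ n := by rw [hn]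
        _ = (s0 ≫ e) ≫ n := by simp
        _ = (w ≫ a) ≫ n := by rw [cw]
        _ = w ≫ a ≫ n := by simp
        _ = w ≫ b ≫ p := by rw [hab]
        _ = (w ≫ b) ≫ p := by simp
    have h1 : kerp.lift (s0 ≫ m) (w ≫ b) hcone ≫ ρ₁ = s0 ≫ m := kerp.lift_fst _ _ _
    have h2 : kerp.lift (s0 ≫ m) (w ≫ b) hcone ≫ ρ₂ = w ≫ b := kerp.lift_snd _ _ _
    obtain ⟨v, hv1, hv2⟩ := lem2 s0 (kerp.lift (s0 ≫ m) (w ≫ b) hcone) h1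
    obtain ⟨x, hx1, hx2⟩ := regEpiDescend w hw m inferInstance v b (by rw [hv1, h2])
    refine ⟨x, ?_, hx2⟩
    apply regEpi_cancel w hw
    rw [← Category.assoc, hx1, hv2, ← cw]
  have hpull : IsPullback e m n p := by
    refine IsPullback.of_isLimit (PullbackCone.IsLimit.mk hn
      (fun s => (keylift s.fst s.snd s.condition).choose)
      (fun s => (keylift s.fst s.snd s.condition).choose_spec.1)
      (fun s => (keylift s.fst s.snd s.condition).choose_spec.2)
      ?_)
    intro s mm hm1 hm2
    apply (cancel_mono m).mp
    rw [hm2, (keylift s.fst s.snd s.condition).choose_spec.2]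
  -- n is a mono
  have monon : Mono n := by
    have hkk : pullback.fst n n = pullback.snd n n := by
      obtain ⟨hε₁⟩ := hstab (pullback.fst n n) e he
      set ε₁ := pullback.fst (pullback.fst n n) e with hε₁d
      set s₁ := pullback.snd (pullback.fst n n) e with hs₁d
      have c₁ : ε₁ ≫ pullback.fst n n = s₁ ≫ e := pullback.condition
      obtain ⟨hε₂⟩ := hstab (ε₁ ≫ pullback.snd n n) e he
      set ε₂ := pullback.fst (ε₁ ≫ pullback.snd n n) e with hε₂d
      set s₂ := pullback.snd (ε₁ ≫ pullback.snd n n) e with hs₂d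
      have c₂ : ε₂ ≫ ε₁ ≫ pullback.snd n n = s₂ ≫ e := by
        have := pullback.condition (f := ε₁ ≫ pullback.snd n n) (g := e)
        simpa using this
      have hcone : ((ε₂ ≫ s₁) ≫ m) ≫ p = (s₂ ≫ m) ≫ p := by
        calc ((ε₂ ≫ s₁) ≫ m) ≫ p = ε₂ ≫ s₁ ≫ m ≫ p := by simp
          _ = ε₂ ≫ s₁ ≫ e ≫ n := by rw [hn]
          _ = ε₂ ≫ (s₁ ≫ e) ≫ n := by simp
          _ = ε₂ ≫ (ε₁ ≫ pullback.fst n n) ≫ n := by rw [c₁]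
          _ = ε₂ ≫ ε₁ ≫ pullback.fst n n ≫ n := by simp
          _ = ε₂ ≫ ε₁ ≫ pullback.snd n n ≫ n := by rw [pullback.condition]
          _ = (ε₂ ≫ ε₁ ≫ pullback.snd n n) ≫ n := by simp
          _ = (s₂ ≫ e) ≫ n := by rw [c₂]
          _ = s₂ ≫ e ≫ n := by simp
          _ = s₂ ≫ m ≫ p := by rw [hn]
          _ = (s₂ ≫ m) ≫ p := by simp
      have h1 : kerp.lift ((ε₂ ≫ s₁) ≫ m) (s₂ ≫ m) hcone ≫ ρ₁ = (ε₂ ≫ s₁) ≫ m :=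
        kerp.lift_fst _ _ _
      have h2 : kerp.lift ((ε₂ ≫ s₁) ≫ m) (s₂ ≫ m) hcone ≫ ρ₂ = s₂ ≫ m :=
        kerp.lift_snd _ _ _
      obtain ⟨v, hv1, hv2⟩ := lem2 (ε₂ ≫ s₁) (kerp.lift ((ε₂ ≫ s₁) ≫ m) (s₂ ≫ m) hcone) h1
      have hvs : v = s₂ := by
        apply (cancel_mono m).mp
        rw [hv1, h2]
      apply regEpi_cancel ε₁ hε₁
      apply regEpi_cancel ε₂ hε₂
      calc ε₂ ≫ ε₁ ≫ pullback.fst n n = ε₂ ≫ (ε₁ ≫ pullback.fst n n) := by simp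
        _ = ε₂ ≫ s₁ ≫ e := by rw [c₁]
        _ = (ε₂ ≫ s₁) ≫ e := by simp
        _ = v ≫ e := hv2.symm
        _ = s₂ ≫ e := by rw [hvs]
        _ = ε₂ ≫ ε₁ ≫ pullback.snd n n := c₂.symm
    constructor
    intro Z' u v huv
    calc u = pullback.lift u v huv ≫ pullback.fst n n := (pullback.lift_fst _ _ _).symm
      _ = pullback.lift u v huv ≫ pullback.snd n n := by rw [hkk]
      _ = v := pullback.lift_snd _ _ _
  exact ⟨_, p, n, hpush, hpull, monon⟩
end

section
/- Let C be an exact category satisfying Condition (*). Then every monomorphism in C is a regular monomorphism, and consequently C is balanced (every morphism that is both a monomorphism and an epimorphism is an isomorphism). -/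
open CategoryTheory Limits

attribute [local simp] prod.lift_fst prod.lift_snd prod.lift_fst_assoc prod.lift_snd_assoc pullback.lift_fst pullback.lift_snd pullback.lift_fst_assoc pullback.lift_snd_assoc coprod.inl_desc coprod.inr_desc coprod.inl_desc_assoc coprod.inr_desc_assoc

namespace MRHelp

variable {C : Type*} [Category C]

/-- Build an `IsPullback` from an explicit universal property. -/
theorem isPullback_of {P X Y Z : C} (fst : P ⟶ X) (snd : P ⟶ Y) (f : X ⟶ Z) (g : Y ⟶ Z)
    (w : fst ≫ f = snd ≫ g)
    (lift : ∀ {T : C} (x : T ⟶ X) (y : T ⟶ Y), x ≫ f = y ≫ g → (T ⟶ P))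
    (hfst : ∀ {T : C} (x : T ⟶ X) (y : T ⟶ Y) (h : x ≫ f = y ≫ g), lift x y h ≫ fst = x)
    (hsnd : ∀ {T : C} (x : T ⟶ X) (y : T ⟶ Y) (h : x ≫ f = y ≫ g), lift x y h ≫ snd = y)
    (uniq : ∀ {T : C} (γ γ' : T ⟶ P), γ ≫ fst = γ' ≫ fst → γ ≫ snd = γ' ≫ snd → γ = γ') :
    IsPullback fst snd f g := by
  refine IsPullback.of_isLimit (c := PullbackCone.mk fst snd w) ?_
  refine PullbackCone.IsLimit.mk w (fun s => lift s.fst s.snd s.condition) ?_ ?_ ?_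
  · intro s; exact hfst _ _ _
  · intro s; exact hsnd _ _ _
  · intro s mm h1 h2
    exact uniq _ _ (by rw [h1, hfst]) (by rw [h2, hsnd])

theorem mono_of_isPullback_id {X Y : C} {f : X ⟶ Y}
    (h : IsPullback (𝟙 X) (𝟙 X) f f) : Mono f := by
  constructor
  intro T u v huv
  have := h.lift u v huv
  have h1 := h.lift_fst u v huv
  have h2 := h.lift_snd u v huv
  simp only [Category.comp_id] at h1 h2
  rw [← h1]; exact h2

theorem mono_of_pullback_fst_eq_snd {X Y : C} (f : X ⟶ Y) [HasPullback f f]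
    (h : pullback.fst f f = pullback.snd f f) : Mono f := by
  constructor
  intro T u v huv
  have h1 := pullback.lift_fst u v huv
  have h2 := pullback.lift_snd u v huv
  rw [← h1, h]; exact h2

/-- Transport of a pullback square along an isomorphism of the total. -/
theorem isPullback_of_iso_total {P P' X Y Z : C} {fst : P ⟶ X} {snd : P ⟶ Y} {f : X ⟶ Z}
    {g : Y ⟶ Z} (h : IsPullback fst snd f g) (φ : P' ⟶ P) [IsIso φ] :
    IsPullback (φ ≫ fst) (φ ≫ snd) f g := by
  refine isPullback_of _ _ _ _ (by simp [h.w]) (fun x y hxy => h.lift x y hxy ≫ inv φ) ?_ ?_ ?_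
  · intro T x y hxy; simp [h.lift_fst]
  · intro T x y hxy; simp [h.lift_snd]
  · intro T γ γ' h1 h2
    have : (γ ≫ φ) = (γ' ≫ φ) := h.hom_ext (by simpa using h1) (by simpa using h2)
    simpa using this =≫ inv φ

/-- Transport of a pullback square along precomposition of the `f`-leg with an iso. -/
theorem isPullback_iso_fst_leg {P X X' Y Z : C} {fst : P ⟶ X} {snd : P ⟶ Y} {f : X ⟶ Z}
    {g : Y ⟶ Z} (h : IsPullback fst snd f g) (η : X' ⟶ X) [IsIso η] :
    IsPullback (fst ≫ inv η) snd (η ≫ f) g := by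
  refine isPullback_of _ _ _ _ (by simp [h.w]) (fun x y hxy => h.lift (x ≫ η) y (by simpa using hxy)) ?_ ?_ ?_
  · intro T x y hxy; rw [← Category.assoc, h.lift_fst]; simp
  · intro T x y hxy; exact h.lift_snd _ _ _
  · intro T γ γ' h1 h2
    refine h.hom_ext ?_ h2
    have := h1 =≫ η; simpa using this

/-- Transport of a pullback square along precomposition of the `g`-leg with an iso. -/
theorem isPullback_iso_snd_leg {P X Y Y' Z : C} {fst : P ⟶ X} {snd : P ⟶ Y} {f : X ⟶ Z}
    {g : Y ⟶ Z} (h : IsPullback fst snd f g) (η : Y' ⟶ Y) [IsIso η] :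
    IsPullback fst (snd ≫ inv η) f (η ≫ g) := by
  exact (isPullback_iso_fst_leg h.flip η).flip

/-- Post-composing both legs of a pullback cospan with an iso. -/
theorem isPullback_comp_iso {P X Y Z Z' : C} {fst : P ⟶ X} {snd : P ⟶ Y} {f : X ⟶ Z}
    {g : Y ⟶ Z} (h : IsPullback fst snd f g) (φ : Z ⟶ Z') [IsIso φ] :
    IsPullback fst snd (f ≫ φ) (g ≫ φ) := by
  refine isPullback_of _ _ _ _ (by rw [← Category.assoc, h.w, Category.assoc]) ?_ ?_ ?_ ?_
  · intro T x y hxy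
    refine h.lift x y ?_
    have := hxy =≫ inv φ
    simpa using this
  · intro T x y hxy; exact h.lift_fst _ _ _
  · intro T x y hxy; exact h.lift_snd _ _ _
  · intro T γ γ' h1 h2; exact h.hom_ext h1 h2

/-- Cancelling an iso prefix on the `g`-leg of a pullback square. -/
theorem isPullback_snd_leg_cancel {P X Y Y' Z : C} {fst : P ⟶ X} {snd : P ⟶ Y} {f : X ⟶ Z}
    {g : Y' ⟶ Z} {η : Y ⟶ Y'} (h : IsPullback fst snd f (η ≫ g)) [IsIso η] :
    IsPullback fst (snd ≫ η) f g := by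
  refine isPullback_of _ _ _ _ (by rw [h.w, Category.assoc]) ?_ ?_ ?_ ?_
  · intro T x y hxy
    refine h.lift x (y ≫ inv η) ?_
    rw [hxy]; simp
  · intro T x y hxy; exact h.lift_fst _ _ _
  · intro T x y hxy
    rw [← Category.assoc, h.lift_snd]; simp
  · intro T γ γ' h1 h2
    refine h.hom_ext h1 ?_
    have := h2 =≫ inv η
    simpa using this

/-- If a strong epi factors through a mono, the mono is an iso. -/
theorem isIso_of_strongEpi_fac {X M Y : C} {c : X ⟶ Y} [StrongEpi c] {π : X ⟶ M} {μ : M ⟶ Y}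
    [Mono μ] (h : π ≫ μ = c) : IsIso μ := by
  have sq : CommSq π c μ (𝟙 Y) := ⟨by simp [h]⟩
  refine ⟨sq.lift, ?_, by simpa using sq.fac_right⟩
  have h2 := sq.fac_right
  rw [← cancel_mono μ]
  simp [h2]

/-- Factor a map through a mono, given a factorization after composing with a strong epi. -/
theorem fac_through_mono_of_cover {X Y M Z : C} (c : X ⟶ Y) [StrongEpi c] (μ : M ⟶ Z) [Mono μ]
    (gmap : Y ⟶ Z) (t : X ⟶ M) (h : c ≫ gmap = t ≫ μ) : ∃ l : Y ⟶ M, l ≫ μ = gmap ∧ c ≫ l = t := by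
  have sq : CommSq t c μ gmap := ⟨h.symm⟩
  exact ⟨sq.lift, sq.fac_right, sq.fac_left⟩


section Stab
variable [HasPullbacks C] (hstab : RegularEpisPullbackStable C)

include hstab

/-- The `fst`-leg of a pullback square whose `g`-leg is a regular epi is a strong epi. -/
theorem strongEpi_fst_of_isPullback {P X Y Z : C} {fst : P ⟶ X} {snd : P ⟶ Y} {f : X ⟶ Z}
    {g : Y ⟶ Z} (h : IsPullback fst snd f g) (hg : RegularEpi g) : StrongEpi fst := by
  obtain ⟨re⟩ := hstab f g hg
  haveI := isRegularEpi_of_regularEpi re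
  haveI : StrongEpi (pullback.fst f g) := inferInstance
  have : h.isoPullback.hom ≫ pullback.fst f g = fst := h.isoPullback_hom_fst
  rw [← this]
  infer_instance

/-- Covering `pullback f g` by a square over `(e ≫ f, g)`, for `e` a regular epi. -/
theorem strongEpi_cover_fst {P X X' Y Z : C} {a : P ⟶ X} {snd : P ⟶ Y} {e : X ⟶ X'} {f : X' ⟶ Z}
    {g : Y ⟶ Z} (sq : IsPullback a snd (e ≫ f) g) (he : RegularEpi e) [HasPullback f g] :
    StrongEpi (pullback.lift (a ≫ e) snd
      (by rw [Category.assoc]; exact sq.w) : P ⟶ pullback f g) := by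
  set c := (pullback.lift (a ≫ e) snd
      (by rw [Category.assoc]; exact sq.w) : P ⟶ pullback f g) with hc
  have hpb : IsPullback c a (pullback.fst f g) e := by
    refine isPullback_of _ _ _ _ (by simp [hc]) ?_ ?_ ?_ ?_
    · intro T z y hzy
      exact sq.lift y (z ≫ pullback.snd f g)
        (by rw [← Category.assoc, ← hzy, Category.assoc, Category.assoc, pullback.condition])
    · intro T z y hzy
      apply pullback.hom_ext
      · simp only [hc, Category.assoc, pullback.lift_fst]
        rw [← Category.assoc, sq.lift_fst]; exact hzy.symm
      · simp only [hc, Category.assoc, pullback.lift_snd]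
        rw [sq.lift_snd]
    · intro T z y hzy; exact sq.lift_fst _ _ _
    · intro T γ γ' h1 h2
      refine sq.hom_ext h2 ?_
      have e1 : γ ≫ c ≫ pullback.snd f g = γ' ≫ c ≫ pullback.snd f g := by
        rw [← Category.assoc, ← Category.assoc, h1]
      simpa [hc] using e1
  exact strongEpi_fst_of_isPullback hstab hpb he

/-- Covering `pullback f g` by a square over `(f, e ≫ g)`, for `e` a regular epi. -/
theorem strongEpi_cover_snd {P X Y Y' Z : C} {fst : P ⟶ X} {b : P ⟶ Y} {e : Y ⟶ Y'} {f : X ⟶ Z}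
    {g : Y' ⟶ Z} (sq : IsPullback fst b f (e ≫ g)) (he : RegularEpi e) [HasPullback f g] :
    StrongEpi (pullback.lift fst (b ≫ e)
      (by rw [sq.w]; simp) : P ⟶ pullback f g) := by
  have sq' : IsPullback b fst (e ≫ g) f := sq.flip
  have key := strongEpi_cover_fst hstab sq' he
  have : (pullback.lift (b ≫ e) fst (by rw [Category.assoc]; exact sq'.w) :
      P ⟶ pullback g f) ≫ (pullbackSymmetry g f).hom =
      pullback.lift fst (b ≫ e) (by rw [sq.w]; simp) := by
    apply pullback.hom_ext <;> simp
  rw [← this]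
  haveI := key
  exact strongEpi_comp _ _

end Stab


section Cover
variable [HasPullbacks C] [HasBinaryCoproducts C]

/-- The key covering lemma: a pullback along a regular epi of a map defined on a binary
coproduct is covered (by a strong epi) by the coproduct of the piecewise pullbacks. -/
theorem cover_lemma (hstab : RegularEpisPullbackStable C) (hb : CoprodOfPullbacksIsPullback C)
    (hd : RegEpiSquaresAreFeeblePullbacks C)
    {X₁ X₂ E Bt P₁ P₂ : C} {f₁ : X₁ ⟶ Bt} {f₂ : X₂ ⟶ Bt} {g : E ⟶ Bt} (hg : RegularEpi g)
    {a₁ : P₁ ⟶ X₁} {b₁ : P₁ ⟶ E} {a₂ : P₂ ⟶ X₂} {b₂ : P₂ ⟶ E}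
    (sq₁ : IsPullback a₁ b₁ f₁ g) (sq₂ : IsPullback a₂ b₂ f₂ g) :
    StrongEpi (pullback.lift (coprod.desc (a₁ ≫ coprod.inl) (a₂ ≫ coprod.inr))
      (coprod.desc b₁ b₂)
      (by ext <;> simp [sq₁.w, sq₂.w] : _ ≫ coprod.desc f₁ f₂ = _ ≫ g) :
        P₁ ⨿ P₂ ⟶ pullback (coprod.desc f₁ f₂) g) := by
  obtain ⟨wd, ⟨hk⟩⟩ := hd g hg
  set k : E ⨿ E ⟶ pullback g (coprod.desc (𝟙 Bt) (𝟙 Bt)) :=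
    pullback.lift (coprod.desc (𝟙 E) (𝟙 E)) (coprod.map g g) wd with hkdef
  have hμw : pullback.snd (coprod.desc f₁ f₂) g ≫ g =
      (pullback.fst (coprod.desc f₁ f₂) g ≫ coprod.map f₁ f₂) ≫ coprod.desc (𝟙 Bt) (𝟙 Bt) := by
    rw [← pullback.condition]
    simp
  set μ : pullback (coprod.desc f₁ f₂) g ⟶ pullback g (coprod.desc (𝟙 Bt) (𝟙 Bt)) :=
    pullback.lift (pullback.snd (coprod.desc f₁ f₂) g)
      (pullback.fst (coprod.desc f₁ f₂) g ≫ coprod.map f₁ f₂) hμw with hμdef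
  have HB : IsPullback (coprod.map a₁ a₂) (coprod.map b₁ b₂) (coprod.map f₁ f₂)
      (coprod.map g g) := hb _ _ _ _ _ _ _ _ sq₁ sq₂
  set c : P₁ ⨿ P₂ ⟶ pullback (coprod.desc f₁ f₂) g :=
    pullback.lift (coprod.desc (a₁ ≫ coprod.inl) (a₂ ≫ coprod.inr)) (coprod.desc b₁ b₂)
      (by ext <;> simp [sq₁.w, sq₂.w]) with hcdef
  have hcfst : c ≫ pullback.fst (coprod.desc f₁ f₂) g = coprod.map a₁ a₂ := by
    rw [hcdef, pullback.lift_fst]; ext <;> simp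
  have hcsnd : c ≫ pullback.snd (coprod.desc f₁ f₂) g = coprod.desc b₁ b₂ := by
    rw [hcdef, pullback.lift_snd]
  have hmapdesc : coprod.map b₁ b₂ ≫ coprod.desc (𝟙 E) (𝟙 E) = coprod.desc b₁ b₂ := by
    ext <;> simp
  have hPB : IsPullback c (coprod.map b₁ b₂) μ k := by
    refine isPullback_of _ _ _ _ ?_ ?_ ?_ ?_ ?_
    · apply pullback.hom_ext
      · simp only [Category.assoc, hμdef, hkdef, pullback.lift_fst, hcsnd, hmapdesc]
      · simp only [Category.assoc, hμdef, hkdef, pullback.lift_snd]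
        rw [← Category.assoc, hcfst]
        ext <;> simp [← sq₁.w, ← sq₂.w]
    · intro T z u hzu
      refine HB.lift (z ≫ pullback.fst _ _) u ?_
      have := hzu =≫ pullback.snd g (coprod.desc (𝟙 Bt) (𝟙 Bt))
      simpa [hμdef, hkdef] using this
    · intro T z u hzu
      apply pullback.hom_ext
      · rw [Category.assoc, hcfst, HB.lift_fst]
      · rw [Category.assoc, hcsnd, ← hmapdesc, ← Category.assoc, HB.lift_snd]
        have := hzu =≫ pullback.fst g (coprod.desc (𝟙 Bt) (𝟙 Bt))
        simp only [hμdef, hkdef, Category.assoc, pullback.lift_fst] at this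
        exact this.symm
    · intro T z u hzu
      exact HB.lift_snd _ _ _
    · intro T γ γ' h1 h2
      refine HB.hom_ext ?_ h2
      rw [← hcfst, ← Category.assoc, ← Category.assoc, h1]
  have : RegularEpi k := hk
  exact strongEpi_fst_of_isPullback hstab hPB this

end Cover

section Image
variable [HasPullbacks C]

/-- Regular-image factorization: the canonical map from the coequalizer of the kernel
pair of `f` to the codomain is a monomorphism. -/
theorem mono_image_desc (hcoeq : HasKernelPairCoequalizers C)
    (hstab : RegularEpisPullbackStable C) {X Y : C} (f : X ⟶ Y) :
    haveI := hcoeq f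
    Mono (coequalizer.desc f (pullback.condition (f := f) (g := f))) := by
  haveI := hcoeq f
  set e := coequalizer.π (pullback.fst f f) (pullback.snd f f) with hedef
  set n := coequalizer.desc f (pullback.condition (f := f) (g := f)) with hndef
  have hen : e ≫ n = f := by simp [hedef, hndef]
  have hre : RegularEpi e := coequalizerRegular _ _
  -- cover pullback n n by pullback f f in two steps
  have sqff : IsPullback (pullback.fst f f) (pullback.snd f f) (e ≫ n) f := by
    rw [hen]; exact IsPullback.of_hasPullback f f
  have hA := strongEpi_cover_fst hstab sqff hre
  set a : pullback f f ⟶ pullback n f := pullback.lift (pullback.fst f f ≫ e)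
    (pullback.snd f f) (by rw [Category.assoc]; exact sqff.w) with hadef
  have sqnf : IsPullback (pullback.fst n f) (pullback.snd n f) n (e ≫ n) := by
    rw [hen]; exact IsPullback.of_hasPullback n f
  have hB := strongEpi_cover_snd hstab sqnf hre
  set b : pullback n f ⟶ pullback n n := pullback.lift (pullback.fst n f)
    (pullback.snd n f ≫ e) (by rw [sqnf.w]; simp) with hbdef
  haveI := hA; haveI := hB
  haveI : Epi (a ≫ b) := by
    haveI : StrongEpi (a ≫ b) := strongEpi_comp _ _
    infer_instance
  apply mono_of_pullback_fst_eq_snd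
  have h1 : (a ≫ b) ≫ pullback.fst n n = pullback.fst f f ≫ e := by
    simp [hadef, hbdef]
  have h2 : (a ≫ b) ≫ pullback.snd n n = pullback.snd f f ≫ e := by
    simp [hadef, hbdef]
  rw [← cancel_epi (a ≫ b), h1, h2, hedef]
  exact coequalizer.condition _ _

end Image

section ImageFac
variable [HasPullbacks C]

/-- Packaged regular image factorization. -/
theorem image_fac (hcoeq : HasKernelPairCoequalizers C)
    (hstab : RegularEpisPullbackStable C) {X Y : C} (f : X ⟶ Y) :
    ∃ (I : C) (e : X ⟶ I) (n : I ⟶ Y), e ≫ n = f ∧ Nonempty (RegularEpi e) ∧ Mono n ∧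
      (pullback.fst f f ≫ e = pullback.snd f f ≫ e) ∧
      (∀ {Z : C} (h : X ⟶ Z), pullback.fst f f ≫ h = pullback.snd f f ≫ h →
        ∃ l, e ≫ l = h) := by
  haveI := hcoeq f
  refine ⟨_, coequalizer.π (pullback.fst f f) (pullback.snd f f),
    coequalizer.desc f (pullback.condition (f := f) (g := f)), by simp,
    ⟨coequalizerRegular _ _⟩, mono_image_desc hcoeq hstab f, coequalizer.condition _ _,
    fun {Z} h hh => ⟨coequalizer.desc h hh, by simp⟩⟩

end ImageFac

section Main
variable [HasFiniteLimits C] [HasFiniteCoproducts C]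

set_option maxHeartbeats 2000000 in
theorem regularMono_of_mono (hcoeq : HasKernelPairCoequalizers C)
    (hstab : RegularEpisPullbackStable C) (hexact : EquivRelsEffective C)
    (hb : CoprodOfPullbacksIsPullback C) (hc : MonoSquaresArePullbacks C)
    (hd : RegEpiSquaresAreFeeblePullbacks C)
    {S A : C} (m : S ⟶ A) (hm : Mono m) : Nonempty (RegularMono m) := by
  haveI := hm
  -- basic morphisms
  set q : A ⨿ S ⟶ A := coprod.desc (𝟙 A) m with hqdef
  have hq : IsPullback (coprod.desc (𝟙 S) (𝟙 S)) (coprod.map m (𝟙 S)) m q := hc m hm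
  set ι : A ⨿ S ⟶ A ⨿ A := coprod.map (𝟙 A) m with hιdef
  set sw : A ⨿ A ⟶ A ⨿ A := coprod.desc coprod.inr coprod.inl with hswdef
  set r₁ : (A ⨿ S) ⨿ (A ⨿ S) ⟶ A ⨿ A := coprod.map q q with hr₁def
  set r₂ : (A ⨿ S) ⨿ (A ⨿ S) ⟶ A ⨿ A := coprod.desc ι (ι ≫ sw) with hr₂def
  set w : (A ⨿ S) ⨿ (A ⨿ S) ⟶ (A ⨿ A) ⨯ (A ⨿ A) := prod.lift r₁ r₂ with hwdef
  have hwr₁ : w ≫ prod.fst = r₁ := by rw [hwdef]; simp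
  have hwr₂ : w ≫ prod.snd = r₂ := by rw [hwdef]; simp
  obtain ⟨I, e, n, hen, ⟨hre⟩, hn, hecoeq, hdesc⟩ := image_fac hcoeq hstab w
  haveI := hn
  obtain ⟨ρ₁, ρ₂, hρ⟩ : ∃ ρ₁ ρ₂, prod.lift ρ₁ ρ₂ = n :=
    ⟨n ≫ prod.fst, n ≫ prod.snd, by apply Limits.prod.hom_ext <;> simp⟩
  have hρ₁n : ρ₁ = n ≫ prod.fst := by rw [← hρ]; simp
  have hρ₂n : ρ₂ = n ≫ prod.snd := by rw [← hρ]; simp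
  have heρ₁ : e ≫ ρ₁ = r₁ := by rw [hρ₁n, ← Category.assoc, hen, hwr₁]
  have heρ₂ : e ≫ ρ₂ = r₂ := by rw [hρ₂n, ← Category.assoc, hen, hwr₂]
  haveI heepi : Epi e := RegularEpi.epi e hre
  -- the relation is a monomorphism
  have hmono : Mono (prod.lift ρ₁ ρ₂) := by rw [hρ]; exact hn
  -- reflexivity
  have hdr₁ : (coprod.map coprod.inl coprod.inl) ≫ r₁ = 𝟙 (A ⨿ A) := by
    rw [hr₁def]; ext <;> simp [hqdef]
  have hdr₂ : (coprod.map coprod.inl coprod.inl) ≫ r₂ = 𝟙 (A ⨿ A) := by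
    rw [hr₂def]; ext <;> simp [hιdef, hswdef]
  have hrefl : ∃ d, d ≫ ρ₁ = 𝟙 (A ⨿ A) ∧ d ≫ ρ₂ = 𝟙 (A ⨿ A) := by
    refine ⟨coprod.map coprod.inl coprod.inl ≫ e, ?_, ?_⟩
    · rw [Category.assoc, heρ₁]; exact hdr₁
    · rw [Category.assoc, heρ₂]; exact hdr₂
  -- split epi r₁
  haveI : IsSplitEpi r₁ := ⟨⟨⟨coprod.map coprod.inl coprod.inl, hdr₁⟩⟩⟩
  have hrr₁ : RegularEpi r₁ := RegularEpi.ofSplitEpi r₁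
  -- symmetry
  set σ : (A ⨿ S) ⨿ (A ⨿ S) ⟶ (A ⨿ S) ⨿ (A ⨿ S) :=
    coprod.desc (coprod.desc (coprod.inl ≫ coprod.inl) (coprod.inr ≫ coprod.inr))
      (coprod.desc (coprod.inl ≫ coprod.inr) (coprod.inr ≫ coprod.inl)) with hσdef
  have hσr₁ : σ ≫ r₁ = r₂ := by
    rw [hσdef, hr₁def, hr₂def]; ext <;> simp [hqdef, hιdef, hswdef]
  have hσr₂ : σ ≫ r₂ = r₁ := by
    rw [hσdef, hr₂def, hr₁def]; ext <;> simp [hqdef, hιdef, hswdef]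
  have hσw : σ ≫ w = prod.lift r₂ r₁ := by
    rw [hwdef, prod.comp_lift, hσr₁, hσr₂]
  have hsymm : ∃ s, s ≫ ρ₁ = ρ₂ ∧ s ≫ ρ₂ = ρ₁ := by
    have hps₁ : pullback.fst w w ≫ r₁ = pullback.snd w w ≫ r₁ := by
      have h2 := pullback.condition (f := w) (g := w) =≫ prod.fst
      simpa only [Category.assoc, hwr₁] using h2
    have hps₂ : pullback.fst w w ≫ r₂ = pullback.snd w w ≫ r₂ := by
      have h2 := pullback.condition (f := w) (g := w) =≫ prod.snd
      simpa only [Category.assoc, hwr₂] using h2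
    have hcone : (pullback.fst w w ≫ σ) ≫ w = (pullback.snd w w ≫ σ) ≫ w := by
      rw [Category.assoc, Category.assoc, hσw]
      apply Limits.prod.hom_ext
      · simp only [Category.assoc, prod.lift_fst]
        exact hps₂
      · simp only [Category.assoc, prod.lift_snd]
        exact hps₁
    have hl := pullback.lift_fst (f := w) (g := w) _ _ hcone
    have hl2 := pullback.lift_snd (f := w) (g := w) _ _ hcone
    have hcoeqσ : pullback.fst w w ≫ (σ ≫ e) = pullback.snd w w ≫ (σ ≫ e) := by
      calc pullback.fst w w ≫ σ ≫ e
          = (pullback.lift _ _ hcone ≫ pullback.fst w w) ≫ e := by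
            rw [hl, Category.assoc]
        _ = (pullback.lift _ _ hcone ≫ pullback.snd w w) ≫ e := by
            rw [Category.assoc, Category.assoc, hecoeq]
        _ = pullback.snd w w ≫ σ ≫ e := by rw [hl2, Category.assoc]
    obtain ⟨l, hle⟩ := hdesc (σ ≫ e) hcoeqσ
    refine ⟨l, ?_, ?_⟩
    · rw [← cancel_epi e, ← Category.assoc, hle, Category.assoc, heρ₁, hσr₁, heρ₂]
    · rw [← cancel_epi e, ← Category.assoc, hle, Category.assoc, heρ₂, hσr₂, heρ₁]
  -- transitivity
  set fstC : (A ⨿ S) ⨿ (S ⨿ S) ⟶ A ⨿ S := coprod.map q (coprod.desc (𝟙 S) (𝟙 S)) with hfstCdef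
  set sndC : (A ⨿ S) ⨿ (S ⨿ S) ⟶ (A ⨿ S) ⨿ (A ⨿ S) :=
    coprod.map (𝟙 (A ⨿ S)) (coprod.map m (𝟙 S)) with hsndCdef
  have sqa : IsPullback q (𝟙 (A ⨿ S)) (𝟙 A) q := IsPullback.of_vert_isIso ⟨by simp⟩
  have P1 : IsPullback fstC sndC ι r₁ := hb _ _ _ _ _ _ _ _ sqa hq
  haveI : IsIso sw := by
    refine ⟨sw, ?_, ?_⟩ <;> (rw [hswdef]; ext <;> simp)
  set ς : (A ⨿ S) ⨿ (A ⨿ S) ⟶ (A ⨿ S) ⨿ (A ⨿ S) := coprod.desc coprod.inr coprod.inl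
    with hςdef
  haveI : IsIso ς := by
    refine ⟨ς, ?_, ?_⟩ <;> (rw [hςdef]; ext <;> simp)
  have hswr : r₁ ≫ sw = ς ≫ r₁ := by rw [hr₁def, hswdef, hςdef]; ext <;> simp
  have P2 : IsPullback fstC (sndC ≫ ς) (ι ≫ sw) r₁ := by
    have step1 : IsPullback fstC sndC (ι ≫ sw) (r₁ ≫ sw) := isPullback_comp_iso P1 sw
    rw [hswr] at step1
    exact isPullback_snd_leg_cancel step1
  have hinlr₂ : (coprod.inl : A ⨿ S ⟶ _) ≫ r₂ = ι := by rw [hr₂def]; simp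
  have hinrr₂ : (coprod.inr : A ⨿ S ⟶ _) ≫ r₂ = ι ≫ sw := by rw [hr₂def]; simp
  have hwchat : coprod.desc (fstC ≫ coprod.inl) (fstC ≫ coprod.inr) ≫ r₂ =
      coprod.desc sndC (sndC ≫ ς) ≫ r₁ := by
    apply coprod.hom_ext
    · rw [coprod.inl_desc_assoc, coprod.inl_desc_assoc, Category.assoc, hinlr₂, P1.w]
    · rw [coprod.inr_desc_assoc, coprod.inr_desc_assoc, Category.assoc, hinrr₂]
      exact P2.w
  have htrans : ∃ t : pullback ρ₂ ρ₁ ⟶ _, t ≫ ρ₁ = pullback.fst ρ₂ ρ₁ ≫ ρ₁ ∧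
      t ≫ ρ₂ = pullback.snd ρ₂ ρ₁ ≫ ρ₂ := by
    have hSE := cover_lemma hstab hb hd hrr₁ P1 P2
    set chat : ((A ⨿ S) ⨿ (S ⨿ S)) ⨿ ((A ⨿ S) ⨿ (S ⨿ S)) ⟶ pullback r₂ r₁ :=
      pullback.lift (coprod.desc (fstC ≫ coprod.inl) (fstC ≫ coprod.inr))
        (coprod.desc sndC (sndC ≫ ς)) hwchat with hchatdef
    haveI hchSE : StrongEpi chat := hSE
    have sqW : IsPullback (pullback.fst r₂ r₁) (pullback.snd r₂ r₁) r₂ (e ≫ ρ₁) := by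
      rw [heρ₁]; exact IsPullback.of_hasPullback r₂ r₁
    have hcA := strongEpi_cover_snd hstab sqW hre
    set cA : pullback r₂ r₁ ⟶ pullback r₂ ρ₁ := pullback.lift (pullback.fst r₂ r₁)
      (pullback.snd r₂ r₁ ≫ e) (by rw [sqW.w]; simp) with hcAdef
    haveI : StrongEpi cA := hcA
    have sqM : IsPullback (pullback.fst r₂ ρ₁) (pullback.snd r₂ ρ₁) (e ≫ ρ₂) ρ₁ := by
      rw [heρ₂]; exact IsPullback.of_hasPullback r₂ ρ₁
    have hcB := strongEpi_cover_fst hstab sqM hre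
    set cB : pullback r₂ ρ₁ ⟶ pullback ρ₂ ρ₁ := pullback.lift (pullback.fst r₂ ρ₁ ≫ e)
      (pullback.snd r₂ ρ₁) (by rw [Category.assoc]; exact sqM.w) with hcBdef
    haveI : StrongEpi cB := hcB
    haveI : StrongEpi (cA ≫ cB) := strongEpi_comp _ _
    haveI : StrongEpi (chat ≫ cA ≫ cB) := strongEpi_comp _ _
    set tI : (A ⨿ S) ⨿ (S ⨿ S) ⟶ (A ⨿ S) ⨿ (A ⨿ S) :=
      coprod.desc coprod.inl
        (coprod.desc (coprod.inr ≫ coprod.inl) (m ≫ coprod.inl ≫ coprod.inl)) with htIdef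
    set tII : (A ⨿ S) ⨿ (S ⨿ S) ⟶ (A ⨿ S) ⨿ (A ⨿ S) :=
      coprod.desc coprod.inr
        (coprod.desc (coprod.inr ≫ coprod.inr) (m ≫ coprod.inl ≫ coprod.inr)) with htIIdef
    set th := coprod.desc tI tII with hthdef
    have E1 : th ≫ r₁ =
        coprod.desc (fstC ≫ coprod.inl) (fstC ≫ coprod.inr) ≫ r₁ := by
      rw [hthdef, htIdef, htIIdef, hfstCdef, hr₁def]
      ext <;> simp [hqdef]
    have E2 : th ≫ r₂ = coprod.desc sndC (sndC ≫ ς) ≫ r₂ := by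
      rw [hthdef, htIdef, htIIdef, hsndCdef, hr₂def, hςdef, hιdef, hswdef]
      ext <;> simp
    have hkey : (chat ≫ cA ≫ cB) ≫
        prod.lift (pullback.fst ρ₂ ρ₁ ≫ ρ₁) (pullback.snd ρ₂ ρ₁ ≫ ρ₂) = (th ≫ e) ≫ n := by
      apply Limits.prod.hom_ext
      · simp only [Category.assoc, prod.lift_fst]
        rw [← hρ₁n]
        have s1 : cB ≫ pullback.fst ρ₂ ρ₁ ≫ ρ₁ = pullback.fst r₂ ρ₁ ≫ e ≫ ρ₁ := by
          rw [← Category.assoc, hcBdef, pullback.lift_fst, Category.assoc]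
        rw [s1, heρ₁]
        have s2 : cA ≫ pullback.fst r₂ ρ₁ ≫ r₁ = pullback.fst r₂ r₁ ≫ r₁ := by
          rw [← Category.assoc, hcAdef, pullback.lift_fst]
        rw [s2]
        have s3 : chat ≫ pullback.fst r₂ r₁ ≫ r₁ =
            (coprod.desc (fstC ≫ coprod.inl) (fstC ≫ coprod.inr)) ≫ r₁ := by
          rw [← Category.assoc, hchatdef, pullback.lift_fst]
        rw [s3, ← E1]
      · simp only [Category.assoc, prod.lift_snd]
        rw [← hρ₂n]
        have s1 : cB ≫ pullback.snd ρ₂ ρ₁ ≫ ρ₂ = pullback.snd r₂ ρ₁ ≫ ρ₂ := by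
          rw [← Category.assoc, hcBdef, pullback.lift_snd]
        rw [s1]
        have s2 : cA ≫ pullback.snd r₂ ρ₁ ≫ ρ₂ = pullback.snd r₂ r₁ ≫ e ≫ ρ₂ := by
          rw [← Category.assoc, hcAdef, pullback.lift_snd, Category.assoc]
        rw [s2, heρ₂]
        have s3 : chat ≫ pullback.snd r₂ r₁ ≫ r₂ =
            (coprod.desc sndC (sndC ≫ ς)) ≫ r₂ := by
          rw [← Category.assoc, hchatdef, pullback.lift_snd]
        rw [s3, ← E2]
    obtain ⟨l, hln, -⟩ := fac_through_mono_of_cover (chat ≫ cA ≫ cB) n _ (th ≫ e) hkey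
    refine ⟨l, ?_, ?_⟩
    · have h1 := hln =≫ prod.fst
      simp only [Category.assoc, prod.lift_fst] at h1
      rw [← hρ₁n] at h1
      exact h1
    · have h1 := hln =≫ prod.snd
      simp only [Category.assoc, prod.lift_snd] at h1
      rw [← hρ₂n] at h1
      exact h1
  obtain ⟨Q, p, hKP⟩ := hexact ρ₁ ρ₂ hmono hrefl hsymm htrans
  have hKPsq : IsPullback ρ₁ ρ₂ p p := hKP
  have hinlr₁ : (coprod.inl : A ⨿ S ⟶ (A ⨿ S) ⨿ (A ⨿ S)) ≫ r₁ = q ≫ coprod.inl := by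
    rw [hr₁def]; simp
  have hinrr₁ : (coprod.inr : A ⨿ S ⟶ (A ⨿ S) ⨿ (A ⨿ S)) ≫ r₁ = q ≫ coprod.inr := by
    rw [hr₁def]; simp
  -- the junk pullback K
  set k0 := pullback.fst (initial.to A) q with hk0def
  set kAS := pullback.snd (initial.to A) q with hkASdef
  have hKcond : k0 ≫ initial.to A = kAS ≫ q := pullback.condition
  have sqK : IsPullback k0 kAS (initial.to A) q := IsPullback.of_hasPullback _ _
  have HB2 : IsPullback (coprod.map q k0) (coprod.map (𝟙 (A ⨿ S)) kAS)
      (coprod.map (𝟙 A) (initial.to A)) (coprod.map q q) := hb _ _ _ _ _ _ _ _ sqa sqK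
  haveI : IsIso (coprod.inl : A ⟶ A ⨿ (⊥_ C)) :=
    ⟨coprod.desc (𝟙 A) (initial.to A), by simp,
      coprod.hom_ext (by simp) (initial.hom_ext _ _)⟩
  have hstep := isPullback_iso_fst_leg HB2 (coprod.inl : A ⟶ A ⨿ (⊥_ C))
  have hinlmap : (coprod.inl : A ⟶ A ⨿ (⊥_ C)) ≫ coprod.map (𝟙 A) (initial.to A) =
      (coprod.inl : A ⟶ A ⨿ A) := by simp
  rw [hinlmap] at hstep
  have hinv : inv (coprod.inl : A ⟶ A ⨿ (⊥_ C)) = coprod.desc (𝟙 A) (initial.to A) := by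
    apply IsIso.inv_eq_of_hom_inv_id; simp
  rw [hinv] at hstep
  have haY : (coprod.map q k0) ≫ coprod.desc (𝟙 A) (initial.to A) =
      coprod.desc q (k0 ≫ initial.to A) := by ext <;> simp
  rw [haY] at hstep
  set aY := coprod.desc q (k0 ≫ initial.to A) with haYdef
  set uY := coprod.map (𝟙 (A ⨿ S)) kAS with huYdef
  -- hstep : IsPullback aY uY coprod.inl r₁
  have sqY : IsPullback aY uY (coprod.inl : A ⟶ A ⨿ A) (e ≫ ρ₁) := by
    rw [heρ₁]; exact hstep
  have hcL := strongEpi_cover_snd hstab sqY hre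
  set cL : _ ⟶ pullback (coprod.inl : A ⟶ A ⨿ A) ρ₁ :=
    pullback.lift aY (uY ≫ e) (by rw [sqY.w]; simp) with hcLdef
  haveI : StrongEpi cL := hcL
  -- the S-extraction ψ via condition (c)
  have hbotm : (initial.to S) ≫ m = initial.to A := initial.hom_ext _ _
  have hψcone : (k0 ≫ initial.to S) ≫ m = kAS ≫ q := by
    rw [Category.assoc, hbotm, hKcond]
  set ψ := hq.lift (k0 ≫ initial.to S) kAS hψcone with hψdef
  have hψ₁ : ψ ≫ coprod.desc (𝟙 S) (𝟙 S) = k0 ≫ initial.to S := hq.lift_fst _ _ _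
  have hψ₂ : ψ ≫ coprod.map m (𝟙 S) = kAS := hq.lift_snd _ _ _
  set ℓ₁ : S ⨿ S ⟶ A ⨿ S := coprod.desc coprod.inr (m ≫ coprod.inl) with hℓ₁def
  set πL := coprod.desc (𝟙 (A ⨿ S)) (ψ ≫ ℓ₁) with hπLdef
  set θL : A ⨿ S ⟶ pullback (coprod.inl : A ⟶ A ⨿ A) ρ₁ := pullback.lift q (coprod.inl ≫ e)
    (by rw [Category.assoc, heρ₁, hr₁def, coprod.inl_map]) with hθLdef
  have hℓ₁q : ℓ₁ ≫ q = coprod.desc (𝟙 S) (𝟙 S) ≫ m := by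
    rw [hℓ₁def, hqdef]; ext <;> simp
  have hℓι : ℓ₁ ≫ ι = coprod.map m (𝟙 S) ≫ ι ≫ sw := by
    rw [hℓ₁def, hιdef, hswdef]; ext <;> simp
  -- the factorisation πL ≫ θL = cL
  have hπq : πL ≫ q = aY := by
    rw [hπLdef, haYdef]
    apply coprod.hom_ext
    · simp
    · rw [coprod.inr_desc_assoc, coprod.inr_desc, Category.assoc, hℓ₁q, ← Category.assoc,
        hψ₁, Category.assoc, hbotm]
  have hbotlr : (initial.to A) ≫ (coprod.inl : A ⟶ A ⨿ A) =
      (initial.to A) ≫ (coprod.inr : A ⟶ A ⨿ A) := initial.hom_ext _ _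
  have hpil : πL ≫ coprod.inl ≫ e = uY ≫ e := by
    rw [← cancel_mono n]
    simp only [Category.assoc]
    rw [hen]
    apply Limits.prod.hom_ext
    · simp only [Category.assoc, hwr₁]
      rw [hπLdef, huYdef]
      apply coprod.hom_ext
      · simp
      · rw [coprod.inr_desc_assoc, coprod.inr_map_assoc, hinlr₁, Category.assoc,
          reassoc_of% hℓ₁q, reassoc_of% hψ₁, reassoc_of% hbotm, hinrr₁,
          reassoc_of% hKcond.symm, hbotlr]
    · simp only [Category.assoc, hwr₂]
      rw [hπLdef, huYdef]
      apply coprod.hom_ext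
      · simp
      · rw [coprod.inr_desc_assoc, coprod.inr_map_assoc, hinlr₂, Category.assoc,
          hℓι, reassoc_of% hψ₂, hinrr₂]
  have hfac : πL ≫ θL = cL := by
    apply pullback.hom_ext
    · rw [Category.assoc, hθLdef, pullback.lift_fst, hcLdef, pullback.lift_fst, hπq]
    · rw [Category.assoc, hθLdef, pullback.lift_snd, hcLdef, pullback.lift_snd]
      exact hpil
  -- θL is an iso
  have sqid : IsPullback (𝟙 A) (𝟙 A) (𝟙 A) (𝟙 A) := IsPullback.of_horiz_isIso ⟨by simp⟩
  have HB3 := hb _ _ _ _ _ _ _ _ sqid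
    ((IsKernelPair.id_of_mono m) : IsPullback (𝟙 S) (𝟙 S) m m)
  rw [coprod.map_id_id] at HB3
  have hmι : Mono ι := by
    rw [hιdef]; exact mono_of_isPullback_id HB3
  have hlamn : (coprod.inl ≫ e : A ⨿ S ⟶ I) ≫ n = prod.lift (q ≫ coprod.inl) ι := by
    rw [Category.assoc, hen, hwdef, prod.comp_lift, hinlr₁, hinlr₂]
  haveI : Mono (prod.lift (q ≫ (coprod.inl : A ⟶ A ⨿ A)) ι) := by
    haveI : Mono (prod.lift (q ≫ (coprod.inl : A ⟶ A ⨿ A)) ι ≫ prod.snd) := by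
      rw [prod.lift_snd]; exact hmι
    exact mono_of_mono _ prod.snd
  haveI hlamm : Mono (coprod.inl ≫ e : A ⨿ S ⟶ I) := by
    haveI : Mono ((coprod.inl ≫ e : A ⨿ S ⟶ I) ≫ n) := by rw [hlamn]; infer_instance
    exact mono_of_mono _ n
  haveI : Mono θL := by
    haveI : Mono (θL ≫ pullback.snd (coprod.inl : A ⟶ A ⨿ A) ρ₁) := by
      rw [hθLdef, pullback.lift_snd]; exact hlamm
    exact mono_of_mono _ (pullback.snd (coprod.inl : A ⟶ A ⨿ A) ρ₁)
  haveI : IsIso θL := isIso_of_strongEpi_fac (c := cL) hfac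
  have SQL : IsPullback q (coprod.inl ≫ e) (coprod.inl : A ⟶ A ⨿ A) ρ₁ := by
    have h0 := isPullback_of_iso_total
      (IsPullback.of_hasPullback (coprod.inl : A ⟶ A ⨿ A) ρ₁) θL
    rw [hθLdef, pullback.lift_fst, pullback.lift_snd] at h0
    exact h0
  have SQR1 : IsPullback q ι (coprod.inl ≫ p) p := by
    have h1 := SQL.paste_vert hKPsq
    have h2 : (coprod.inl ≫ e) ≫ ρ₂ = ι := by rw [Category.assoc, heρ₂, hinlr₂]
    rwa [h2] at h1
  -- the square over (ι, inr)
  have sqe1 : IsPullback (initial.to A) (𝟙 (⊥_ C)) (𝟙 A) (initial.to A) :=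
    IsPullback.of_vert_isIso ⟨by simp⟩
  have sqe2 : IsPullback (𝟙 S) m m (𝟙 A) := IsPullback.of_horiz_isIso ⟨by simp⟩
  have HB4 := hb _ _ _ _ _ _ _ _ sqe1 sqe2
  haveI : IsIso (coprod.inr : A ⟶ (⊥_ C) ⨿ A) :=
    ⟨coprod.desc (initial.to A) (𝟙 A), by simp,
      coprod.hom_ext (initial.hom_ext _ _) (by simp)⟩
  have hstep2 := isPullback_iso_snd_leg HB4 (coprod.inr : A ⟶ (⊥_ C) ⨿ A)
  have hinr2 : (coprod.inr : A ⟶ (⊥_ C) ⨿ A) ≫ coprod.map (initial.to A) (𝟙 A) =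
      (coprod.inr : A ⟶ A ⨿ A) := by simp
  rw [hinr2] at hstep2
  have hinv2 : inv (coprod.inr : A ⟶ (⊥_ C) ⨿ A) = coprod.desc (initial.to A) (𝟙 A) := by
    apply IsIso.inv_eq_of_hom_inv_id; simp
  rw [hinv2] at hstep2
  have hβ2 : (coprod.map (𝟙 (⊥_ C)) m) ≫ coprod.desc (initial.to A) (𝟙 A) =
      coprod.desc (initial.to A) m := by ext <;> simp
  rw [hβ2] at hstep2
  have hstep2' : IsPullback (coprod.map (initial.to A) (𝟙 S)) (coprod.desc (initial.to A) m)
      ι (coprod.inr : A ⟶ A ⨿ A) := by rw [hιdef]; exact hstep2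
  -- the fork
  have hj1 : ((coprod.inr : S ⟶ A ⨿ S) ≫ coprod.inl) ≫ r₁ = m ≫ coprod.inl := by
    rw [hr₁def, hqdef]; simp
  have hj2 : ((coprod.inr : S ⟶ A ⨿ S) ≫ coprod.inl) ≫ r₂ = m ≫ coprod.inr := by
    rw [hr₂def, hιdef]; simp
  have hwfork : m ≫ (coprod.inl : A ⟶ A ⨿ A) ≫ p = m ≫ (coprod.inr : A ⟶ A ⨿ A) ≫ p := by
    calc m ≫ coprod.inl ≫ p = (((coprod.inr : S ⟶ A ⨿ S) ≫ coprod.inl) ≫ r₁) ≫ p := by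
          rw [hj1]; simp only [Category.assoc]
      _ = ((coprod.inr : S ⟶ A ⨿ S) ≫ coprod.inl) ≫ e ≫ ρ₁ ≫ p := by
          rw [← heρ₁]; simp only [Category.assoc]
      _ = ((coprod.inr : S ⟶ A ⨿ S) ≫ coprod.inl) ≫ e ≫ ρ₂ ≫ p := by rw [hKPsq.w]
      _ = (((coprod.inr : S ⟶ A ⨿ S) ≫ coprod.inl) ≫ r₂) ≫ p := by
          rw [← heρ₂]; simp only [Category.assoc]
      _ = m ≫ coprod.inr ≫ p := by rw [hj2]; simp only [Category.assoc]
  have hdescSm : coprod.desc (initial.to S) (𝟙 S) ≫ m = coprod.desc (initial.to A) m := by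
    apply coprod.hom_ext
    · rw [coprod.inl_desc_assoc, coprod.inl_desc]; exact hbotm
    · rw [coprod.inr_desc_assoc, coprod.inr_desc, Category.id_comp]
  refine ⟨RegularMono.mk Q (coprod.inl ≫ p) (coprod.inr ≫ p) hwfork ?_⟩
  refine Fork.IsLimit.mk _ (fun s => ?_) (fun s => ?_) (fun s u hu => ?_)
  · -- lift
    refine (hstep2'.lift (SQR1.lift s.ι (s.ι ≫ coprod.inr) ?_) s.ι ?_) ≫
      coprod.desc (initial.to S) (𝟙 S)
    · rw [Category.assoc]; exact s.condition
    · exact SQR1.lift_snd _ _ _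
  · -- fac
    simp only [Fork.ι_ofι, Category.assoc]
    rw [hdescSm, hstep2'.lift_snd]
  · -- uniq
    simp only [Fork.ι_ofι] at hu
    rw [← cancel_mono m, hu]
    simp only [Category.assoc]
    rw [hdescSm, hstep2'.lift_snd]

end Main

end MRHelp
/-- Let `C` be an exact category satisfying Condition (*). Then every monomorphism in
`C` is a regular monomorphism and `C` is balanced. -/
theorem mono_regular_and_balanced {C : Type*} [Category C]
    [HasFiniteLimits C] (hcoeq : HasKernelPairCoequalizers C)
    (hstab : RegularEpisPullbackStable C) (hexact : EquivRelsEffective C)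
    [HasFiniteCoproducts C]
    (hb : CoprodOfPullbacksIsPullback C) (hc : MonoSquaresArePullbacks C)
    (hd : RegEpiSquaresAreFeeblePullbacks C) :
    (∀ {X Y : C} (m : X ⟶ Y), Mono m → Nonempty (RegularMono m)) ∧ Balanced C := by
  have key : ∀ {X Y : C} (m : X ⟶ Y), Mono m → Nonempty (RegularMono m) :=
    fun m hm => MRHelp.regularMono_of_mono hcoeq hstab hexact hb hc hd m hm
  refine ⟨key, ?_⟩
  constructor
  intro X Y f hmf hef
  obtain ⟨rm⟩ := key f hmf
  haveI := rm
  haveI : StrongMono f := rm.strongMono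
  exact isIso_of_epi_of_strongMono f
end
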